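/- arXiv:2508.17406 — 4 statements merged into one kernel-verified Lean document; each statement's English description precedes it below -/
import Mathlib

section
/- For a full-rank lattice L of rank n in a Euclidean space, the function t ↦ log θ_L(t) + (n/2) log t is nondecreasing on (0, ∞), where θ_L(t) = ∑_{v∈L} e^{-πt‖v‖²}. -/
open MeasureTheory Real ENNReal Submodule Bornology

variable {n : ℕ} (c : Module.Basis (Fin n) ℝ (EuclideanSpace ℝ (Fin n)))

noncomputable def lat (m : Fin n → ℤ) : EuclideanSpace ℝ (Fin n) := ∑ i, m i • c i

noncomputable def gg (a : ℝ) (x : EuclideanSpace ℝ (Fin n)) : ℝ≥0∞ :=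
  ENNReal.ofReal (Real.exp (-(Real.pi * a) * ‖x‖ ^ 2))

example : Module.finrank ℝ (EuclideanSpace ℝ (Fin n)) = n := finrank_euclideanSpace_fin

lemma integrable_gauss {a : ℝ} (ha : 0 < a) :
    Integrable (fun x : EuclideanSpace ℝ (Fin n) => Real.exp (-(Real.pi * a) * ‖x‖ ^ 2)) := by
  have h := (GaussianFourier.integrable_cexp_neg_mul_sq_norm_add (V := EuclideanSpace ℝ (Fin n))
    (b := ((Real.pi * a : ℝ) : ℂ)) (by simpa using by positivity) 0 0).norm
  refine h.congr (Filter.Eventually.of_forall fun x => ?_)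
  simp only [Complex.norm_exp]
  norm_num
  left
  ring_nf
  norm_cast

lemma lint_gauss {a : ℝ} (ha : 0 < a) :
    ∫⁻ x : EuclideanSpace ℝ (Fin n), gg a x = ENNReal.ofReal (a ^ (-(n : ℝ) / 2)) := by
  unfold gg
  rw [← MeasureTheory.ofReal_integral_eq_lintegral_ofReal (integrable_gauss ha)
    (Filter.Eventually.of_forall fun x => (Real.exp_pos _).le)]
  rw [GaussianFourier.integral_rexp_neg_mul_sq_norm (by positivity : (0:ℝ) < Real.pi * a)]
  rw [finrank_euclideanSpace_fin]
  congr 1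
  have hπ : Real.pi / (Real.pi * a) = a⁻¹ := by
    field_simp
  rw [hπ, Real.inv_rpow ha.le, ← Real.rpow_neg ha.le, neg_div]

lemma meas_gg (a : ℝ) (v : EuclideanSpace ℝ (Fin n)) :
    Measurable fun x : EuclideanSpace ℝ (Fin n) => gg a (x + v) := by
  have : Continuous fun x : EuclideanSpace ℝ (Fin n) => Real.exp (-(Real.pi * a) * ‖x + v‖ ^ 2) := by
    fun_prop
  exact ENNReal.measurable_ofReal.comp this.measurable

lemma gauss_conv {a b : ℝ} (ha : 0 < a) (hb : 0 < b) (w : EuclideanSpace ℝ (Fin n)) :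
    ∫⁻ x : EuclideanSpace ℝ (Fin n), gg a x * gg b (x + w)
      = ENNReal.ofReal ((a + b) ^ (-(n : ℝ) / 2)) * gg (a * b / (a + b)) w := by
  have hab : (0:ℝ) < a + b := by linarith
  have key : ∀ x : EuclideanSpace ℝ (Fin n),
      gg a x * gg b (x + w)
        = gg (a * b / (a + b)) w * gg (a + b) (x + (b / (a + b)) • w) := by
    intro x
    unfold gg
    rw [← ENNReal.ofReal_mul (Real.exp_pos _).le, ← ENNReal.ofReal_mul (Real.exp_pos _).le,
      ← Real.exp_add, ← Real.exp_add]
    congr 1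
    have e1 : ‖x + w‖ ^ 2 = ‖x‖ ^ 2 + 2 * inner ℝ x w + ‖w‖ ^ 2 := norm_add_sq_real x w
    have e2 : ‖x + (b / (a + b)) • w‖ ^ 2
        = ‖x‖ ^ 2 + 2 * ((b / (a + b)) * inner ℝ x w) + (b / (a + b)) ^ 2 * ‖w‖ ^ 2 := by
      rw [norm_add_sq_real, real_inner_smul_right, norm_smul, mul_pow, Real.norm_eq_abs, sq_abs]
    rw [e1, e2]
    congr 1
    field_simp
    ring
  simp_rw [key]
  rw [lintegral_const_mul' (gg (a * b / (a + b)) w) _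
    (by unfold gg; exact ENNReal.ofReal_ne_top)]
  have htr : ∫⁻ x : EuclideanSpace ℝ (Fin n), gg (a + b) (x + (b / (a + b)) • w)
      = ∫⁻ x : EuclideanSpace ℝ (Fin n), gg (a + b) x := by
    have := (measurePreserving_add_right (volume : Measure (EuclideanSpace ℝ (Fin n)))
      ((b / (a + b)) • w)).lintegral_comp (f := gg (a + b)) (by simpa using meas_gg (a + b) 0)
    simpa using this
  rw [htr, lint_gauss hab, mul_comm]

noncomputable def latEquiv : (Fin n → ℤ) ≃ span ℤ (Set.range ⇑c) :=
  (c.restrictScalars ℤ).equivFun.toEquiv.symm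

lemma coe_latEquiv (m : Fin n → ℤ) :
    ((latEquiv c m : span ℤ (Set.range ⇑c)) : EuclideanSpace ℝ (Fin n)) = lat c m := by
  simp [latEquiv, lat, Module.Basis.equivFun_symm_apply, Module.Basis.restrictScalars_apply,
    Submodule.coe_sum, Submodule.coe_smul_of_tower]

lemma unfold_lintegral (f : EuclideanSpace ℝ (Fin n) → ℝ≥0∞) :
    ∫⁻ x, f x = ∑' m : Fin n → ℤ, ∫⁻ x in ZSpan.fundamentalDomain c, f (lat c m + x) := by
  haveI : MeasurableVAdd (span ℤ (Set.range ⇑c)) (EuclideanSpace ℝ (Fin n)) :=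
    (inferInstance : MeasurableVAdd (span ℤ (Set.range ⇑c)).toAddSubgroup
      (EuclideanSpace ℝ (Fin n)))
  haveI : VAddInvariantMeasure (span ℤ (Set.range ⇑c)) (EuclideanSpace ℝ (Fin n)) volume :=
    (inferInstance : VAddInvariantMeasure (span ℤ (Set.range ⇑c)).toAddSubgroup
      (EuclideanSpace ℝ (Fin n)) volume)
  rw [(ZSpan.isAddFundamentalDomain c volume).lintegral_eq_tsum'' f]
  rw [← (latEquiv c).tsum_eq]
  refine tsum_congr fun m => ?_
  have : ∀ x : EuclideanSpace ℝ (Fin n), (latEquiv c m) +ᵥ x = lat c m + x := by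
    intro x
    rw [← coe_latEquiv c m]
    rfl
  simp_rw [this]

noncomputable def Th (a : ℝ) (x : EuclideanSpace ℝ (Fin n)) : ℝ≥0∞ :=
  ∑' m : Fin n → ℤ, gg a (x + lat c m)

noncomputable def T (t : ℝ) : ℝ≥0∞ := ∑' m : Fin n → ℤ, gg t (lat c m)

noncomputable def F (t : ℝ) : ℝ≥0∞ := ENNReal.ofReal (t ^ ((n : ℝ) / 2)) * T c t

lemma lat_add (m u : Fin n → ℤ) : lat c (u + m) = lat c u + lat c m := by
  simp [lat, add_zsmul, Finset.sum_add_distrib]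

lemma meas_gg' (a : ℝ) : Measurable (gg a (n := n)) := by simpa using meas_gg (n := n) a 0

lemma meas_Th (a : ℝ) : Measurable (Th c a) :=
  Measurable.ennreal_tsum fun m => meas_gg a (lat c m)

lemma Th_periodic (a : ℝ) (u : Fin n → ℤ) (x : EuclideanSpace ℝ (Fin n)) :
    Th c a (lat c u + x) = Th c a x := by
  unfold Th
  calc ∑' m : Fin n → ℤ, gg a (lat c u + x + lat c m)
      = ∑' m : Fin n → ℤ, gg a (x + lat c (u + m)) := by
        refine tsum_congr fun m => ?_
        rw [lat_add]
        congr 1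
        abel
    _ = ∑' m : Fin n → ℤ, gg a (x + lat c m) :=
        (Equiv.addLeft u).tsum_eq (fun k => gg a (x + lat c k))

lemma key_identity {a b : ℝ} (ha : 0 < a) (hb : 0 < b) :
    ∫⁻ x in ZSpan.fundamentalDomain c, Th c a x * Th c b x
      = ENNReal.ofReal ((a + b) ^ (-(n : ℝ) / 2)) * T c (a * b / (a + b)) := by
  calc ∫⁻ x in ZSpan.fundamentalDomain c, Th c a x * Th c b x
      = ∑' m : Fin n → ℤ, ∫⁻ x in ZSpan.fundamentalDomain c,
          gg a (x + lat c m) * Th c b x := by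
        have h1 : ∀ x, Th c a x * Th c b x = ∑' m : Fin n → ℤ, gg a (x + lat c m) * Th c b x :=
          fun x => by rw [Th, ENNReal.tsum_mul_right]
        simp_rw [h1]
        exact lintegral_tsum fun m => ((meas_gg _ _).mul (meas_Th c b)).aemeasurable
    _ = ∑' m : Fin n → ℤ, ∫⁻ x in ZSpan.fundamentalDomain c,
          (fun y => gg a y * Th c b y) (lat c m + x) := by
        refine tsum_congr fun m => lintegral_congr fun x => ?_
        simp only
        rw [add_comm x (lat c m), Th_periodic]
    _ = ∫⁻ x, gg a x * Th c b x := (unfold_lintegral c (fun y => gg a y * Th c b y)).symm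
    _ = ∑' m : Fin n → ℤ, ∫⁻ x, gg a x * gg b (x + lat c m) := by
        have h2 : ∀ x : EuclideanSpace ℝ (Fin n),
            gg a x * Th c b x = ∑' m : Fin n → ℤ, gg a x * gg b (x + lat c m) :=
          fun x => by rw [Th, ENNReal.tsum_mul_left]
        simp_rw [h2]
        exact lintegral_tsum fun m => ((meas_gg' a).mul (meas_gg b (lat c m))).aemeasurable
    _ = ∑' m : Fin n → ℤ, ENNReal.ofReal ((a + b) ^ (-(n : ℝ) / 2))
          * gg (a * b / (a + b)) (lat c m) :=
        tsum_congr fun m => gauss_conv ha hb (lat c m)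
    _ = ENNReal.ofReal ((a + b) ^ (-(n : ℝ) / 2)) * T c (a * b / (a + b)) := by
        rw [ENNReal.tsum_mul_left, T]

lemma F_bound (d : ℝ) (hd : ∀ y ∈ ZSpan.fundamentalDomain c, ‖y‖ ≤ d)
    {t t₀ : ℝ} (ht : 0 < t) (htt : t ≤ t₀) :
    F c t * volume (ZSpan.fundamentalDomain c)
      ≤ ENNReal.ofReal ((2:ℝ) ^ ((n:ℝ)/2) * Real.exp (Real.pi * t₀ * d ^ 2)) := by
  have hTb : T c t * volume (ZSpan.fundamentalDomain c)
      ≤ ENNReal.ofReal (Real.exp (Real.pi * t₀ * d ^ 2) * (t/2) ^ (-(n:ℝ)/2)) := by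
    calc T c t * volume (ZSpan.fundamentalDomain c)
        = ∑' m : Fin n → ℤ, ∫⁻ _ in ZSpan.fundamentalDomain c, gg t (lat c m) := by
          rw [T, ← ENNReal.tsum_mul_right]
          exact tsum_congr fun m => by rw [setLIntegral_const]
      _ ≤ ∑' m : Fin n → ℤ, ∫⁻ y in ZSpan.fundamentalDomain c,
            ENNReal.ofReal (Real.exp (Real.pi * t₀ * d ^ 2)) * gg (t/2) (lat c m + y) := by
          refine ENNReal.tsum_le_tsum fun m => ?_
          refine setLIntegral_mono (Measurable.const_mul (by
            have := meas_gg (n := n) (t/2) (lat c m)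
            
            simpa [add_comm] using this) _) fun y hy => ?_
          have hyd : ‖y‖ ≤ d := hd y hy
          have hd0 : 0 ≤ d := le_trans (norm_nonneg _) hyd
          unfold gg
          rw [← ENNReal.ofReal_mul (Real.exp_pos _).le, ← Real.exp_add]
          refine ENNReal.ofReal_le_ofReal (Real.exp_le_exp.2 ?_)
          have h1 : ‖lat c m + y‖ ^ 2 ≤ 2 * ‖lat c m‖ ^ 2 + 2 * d ^ 2 := by
            nlinarith [norm_add_le (lat c m) y, norm_nonneg (lat c m), norm_nonneg y,
              mul_self_le_mul_self (norm_nonneg (lat c m + y)) (norm_add_le (lat c m) y),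
              mul_self_le_mul_self (norm_nonneg y) hyd,
              sq_nonneg (‖lat c m‖ - ‖y‖)]
          nlinarith [mul_nonneg (mul_nonneg Real.pi_pos.le (sub_nonneg.2 htt)) (sq_nonneg d),
            mul_le_mul_of_nonneg_left h1 (by positivity : (0:ℝ) ≤ Real.pi * (t/2))]
      _ = ENNReal.ofReal (Real.exp (Real.pi * t₀ * d ^ 2))
            * ∑' m : Fin n → ℤ, ∫⁻ y in ZSpan.fundamentalDomain c,
              (fun z => gg (t/2) z) (lat c m + y) := by
          rw [← ENNReal.tsum_mul_left]
          refine tsum_congr fun m => ?_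
          rw [lintegral_const_mul' _ _ ENNReal.ofReal_ne_top]
      _ = ENNReal.ofReal (Real.exp (Real.pi * t₀ * d ^ 2)) * ∫⁻ y, gg (t/2) y := by
          rw [← unfold_lintegral c (fun z => gg (t/2) z)]
      _ = ENNReal.ofReal (Real.exp (Real.pi * t₀ * d ^ 2) * (t/2) ^ (-(n:ℝ)/2)) := by
          rw [lint_gauss (by positivity), ← ENNReal.ofReal_mul (Real.exp_pos _).le]
  calc F c t * volume (ZSpan.fundamentalDomain c)
      = ENNReal.ofReal (t ^ ((n:ℝ)/2)) * (T c t * volume (ZSpan.fundamentalDomain c)) := by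
        rw [F, mul_assoc]
    _ ≤ ENNReal.ofReal (t ^ ((n:ℝ)/2))
          * ENNReal.ofReal (Real.exp (Real.pi * t₀ * d ^ 2) * (t/2) ^ (-(n:ℝ)/2)) :=
        mul_le_mul_right hTb _
    _ = ENNReal.ofReal ((2:ℝ) ^ ((n:ℝ)/2) * Real.exp (Real.pi * t₀ * d ^ 2)) := by
        rw [← ENNReal.ofReal_mul (by positivity)]
        congr 1
        have ht2 : (0:ℝ) < t/2 := by positivity
        have h2 : ((t:ℝ)/2) ^ (-(n:ℝ)/2) = (2/t) ^ ((n:ℝ)/2) := by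
          rw [neg_div, Real.rpow_neg ht2.le, ← Real.inv_rpow ht2.le, inv_div]
        have h3 : t * (2/t) = 2 := by field_simp
        rw [h2, mul_comm (Real.exp (Real.pi * t₀ * d ^ 2)), ← mul_assoc,
          ← Real.mul_rpow ht.le (by positivity), h3]

lemma T_ne_zero {t : ℝ} : T c t ≠ 0 := by
  have h0 : gg t (lat c (0 : Fin n → ℤ)) ≤ T c t := ENNReal.le_tsum 0
  intro h
  rw [h, le_zero_iff] at h0
  simp [gg] at h0
  exact (Real.exp_pos _).not_ge h0

lemma F_ne_zero {t : ℝ} (ht : 0 < t) : F c t ≠ 0 := by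
  rw [F]
  exact mul_ne_zero (by simp [ENNReal.ofReal_eq_zero]; positivity) (T_ne_zero c)

lemma F_ne_top {t : ℝ} (ht : 0 < t) : F c t ≠ ⊤ := by
  obtain ⟨d, hd⟩ := isBounded_iff_forall_norm_le.mp (ZSpan.fundamentalDomain_isBounded c)
  intro h
  have hb := F_bound c d hd ht le_rfl
  rw [h, ENNReal.top_mul (ZSpan.measure_fundamentalDomain_ne_zero c)] at hb
  exact ENNReal.ofReal_ne_top (top_le_iff.mp hb)

lemma F_sq_le {a b : ℝ} (ha : 0 < a) (hb : 0 < b) :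
    F c (a * b / (a + b)) ^ 2 ≤ F c (a / 2) * F c (b / 2) := by
  have hab : (0:ℝ) < a + b := by linarith
  have hconj : Real.HolderConjugate 2 2 := ⟨by norm_num, by norm_num, by norm_num⟩
  have hH := ENNReal.lintegral_mul_le_Lp_mul_Lq
    (volume.restrict (ZSpan.fundamentalDomain c)) hconj
    (meas_Th c a).aemeasurable (meas_Th c b).aemeasurable
  have h22 : ∀ x : ℝ≥0∞, x ^ (2:ℝ) = x * x := fun x => by
    rw [show (2:ℝ) = ((2:ℕ):ℝ) by norm_num, ENNReal.rpow_natCast, sq]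
  simp only [Pi.mul_apply, h22] at hH
  have hkey := key_identity c ha hb
  have hkeya := key_identity c ha ha
  have hkeyb := key_identity c hb hb
  have haa : a * a / (a + a) = a / 2 := by field_simp; ring
  have hbb : b * b / (b + b) = b / 2 := by field_simp; ring
  rw [haa] at hkeya
  rw [hbb] at hkeyb
  have hFc : F c (a * b / (a + b))
      = ENNReal.ofReal ((a * b) ^ ((n:ℝ)/2))
        * ∫⁻ x in ZSpan.fundamentalDomain c, Th c a x * Th c b x := by
    have hre : (a * b / (a + b)) ^ ((n:ℝ)/2)
        = (a * b) ^ ((n:ℝ)/2) * (a + b) ^ (-(n:ℝ)/2) := by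
      rw [neg_div, Real.rpow_neg hab.le, Real.div_rpow (by positivity) hab.le, div_eq_mul_inv]
    rw [F, hre, ENNReal.ofReal_mul (by positivity), hkey, mul_assoc]
  have hra : ∀ {x : ℝ}, 0 < x → (x / 2) ^ ((n:ℝ)/2) = x ^ (n:ℝ) * (x + x) ^ (-(n:ℝ)/2) := by
    intro x hx
    have h2x : x + x = 2 * x := by ring
    rw [h2x, neg_div, Real.rpow_neg (by positivity),
      Real.mul_rpow (by norm_num : (0:ℝ) ≤ 2) hx.le, Real.div_rpow hx.le (by norm_num : (0:ℝ) ≤ 2),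
      show (n:ℝ) = (n:ℝ)/2 + (n:ℝ)/2 by ring, Real.rpow_add hx]
    have h1 : (0:ℝ) < x ^ ((n:ℝ)/2) := Real.rpow_pos_of_pos hx _
    have h2 : (0:ℝ) < (2:ℝ) ^ ((n:ℝ)/2) := Real.rpow_pos_of_pos (by norm_num) _
    field_simp
    ring
  have hFa : F c (a / 2) = ENNReal.ofReal (a ^ (n:ℝ))
      * ∫⁻ x in ZSpan.fundamentalDomain c, Th c a x * Th c a x := by
    rw [F, hra ha, ENNReal.ofReal_mul (by positivity), hkeya, mul_assoc]
  have hFb : F c (b / 2) = ENNReal.ofReal (b ^ (n:ℝ))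
      * ∫⁻ x in ZSpan.fundamentalDomain c, Th c b x * Th c b x := by
    rw [F, hra hb, ENNReal.ofReal_mul (by positivity), hkeyb, mul_assoc]
  calc F c (a * b / (a + b)) ^ 2
      = ENNReal.ofReal ((a * b) ^ ((n:ℝ)/2)) ^ 2
        * (∫⁻ x in ZSpan.fundamentalDomain c, Th c a x * Th c b x) ^ 2 := by
        rw [hFc, mul_pow]
    _ ≤ ENNReal.ofReal ((a * b) ^ ((n:ℝ)/2)) ^ 2
        * ((∫⁻ x in ZSpan.fundamentalDomain c, Th c a x * Th c a x)
          * ∫⁻ x in ZSpan.fundamentalDomain c, Th c b x * Th c b x) := by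
        refine mul_le_mul_right ?_ _
        calc (∫⁻ x in ZSpan.fundamentalDomain c, Th c a x * Th c b x) ^ 2
            ≤ ((∫⁻ x in ZSpan.fundamentalDomain c, Th c a x * Th c a x) ^ (1/(2:ℝ))
              * (∫⁻ x in ZSpan.fundamentalDomain c, Th c b x * Th c b x) ^ (1/(2:ℝ))) ^ 2 :=
              pow_le_pow_left' hH 2
          _ = _ := by
              rw [mul_pow, ← ENNReal.rpow_natCast (_ ^ (1/(2:ℝ))) 2,
                ← ENNReal.rpow_natCast (_ ^ (1/(2:ℝ))) 2, ← ENNReal.rpow_mul, ← ENNReal.rpow_mul]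
              norm_num
    _ = F c (a / 2) * F c (b / 2) := by
        rw [hFa, hFb, ← ENNReal.ofReal_pow (by positivity),
          ← Real.rpow_natCast ((a*b) ^ ((n:ℝ)/2)) 2, ← Real.rpow_mul (by positivity)]
        have h1 : (a * b) ^ ((n:ℝ)/2 * (2:ℕ)) = a ^ (n:ℝ) * b ^ (n:ℝ) := by
          rw [show ((n:ℝ)/2 * (2:ℕ)) = (n:ℝ) by push_cast; ring, Real.mul_rpow ha.le hb.le]
        rw [h1, ENNReal.ofReal_mul (by positivity)]
        ring

noncomputable def fr (t : ℝ) : ℝ := (F c t).toReal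

lemma fr_pos {t : ℝ} (ht : 0 < t) : 0 < fr c t :=
  ENNReal.toReal_pos (F_ne_zero c ht) (F_ne_top c ht)

lemma fr_mid {p q : ℝ} (hp : 0 < p) (hq : 0 < q) :
    fr c (2/(p+q)) ^ 2 ≤ fr c (1/p) * fr c (1/q) := by
  have ha : (0:ℝ) < 2/p := by positivity
  have hb : (0:ℝ) < 2/q := by positivity
  have hpq : (0:ℝ) < p + q := by linarith
  have h1 : (2/p) * (2/q) / (2/p + 2/q) = 2/(p+q) := by
    field_simp
    ring
  have h2 : (2/p)/2 = 1/p := by ring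
  have h3 : (2/q)/2 = 1/q := by ring
  have h := F_sq_le c ha hb
  rw [h1, h2, h3] at h
  have hne : F c (1/p) * F c (1/q) ≠ ⊤ :=
    ENNReal.mul_ne_top (F_ne_top c (by positivity)) (F_ne_top c (by positivity))
  have h' := ENNReal.toReal_mono hne h
  rw [ENNReal.toReal_pow, ENNReal.toReal_mul] at h'
  exact h'

lemma fr_upper (p₀ : ℝ) (hp₀ : 0 < p₀) : ∃ C : ℝ, ∀ u : ℝ, p₀ ≤ u → fr c (1/u) ≤ C := by
  obtain ⟨d, hd⟩ := isBounded_iff_forall_norm_le.mp (ZSpan.fundamentalDomain_isBounded c)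
  refine ⟨(ENNReal.ofReal ((2:ℝ) ^ ((n:ℝ)/2) * Real.exp (Real.pi * (1/p₀) * d ^ 2))
    / volume (ZSpan.fundamentalDomain c)).toReal, fun u hu => ?_⟩
  have hu0 : 0 < u := lt_of_lt_of_le hp₀ hu
  have h1u : 0 < 1/u := by positivity
  have hle : 1/u ≤ 1/p₀ := one_div_le_one_div_of_le hp₀ hu
  have hb := F_bound c d hd h1u hle
  have hF : F c (1/u) ≤ ENNReal.ofReal ((2:ℝ) ^ ((n:ℝ)/2)
      * Real.exp (Real.pi * (1/p₀) * d ^ 2)) / volume (ZSpan.fundamentalDomain c) :=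
    (ENNReal.le_div_iff_mul_le (Or.inl (ZSpan.measure_fundamentalDomain_ne_zero c))
      (Or.inl (ZSpan.fundamentalDomain_isBounded c).measure_lt_top.ne)).mpr hb
  exact ENNReal.toReal_mono
    (ENNReal.div_lt_top ENNReal.ofReal_ne_top (ZSpan.measure_fundamentalDomain_ne_zero c)).ne hF

lemma F_mono {s t : ℝ} (hs : 0 < s) (hst : s ≤ t) : F c s ≤ F c t := by
  have ht : 0 < t := lt_of_lt_of_le hs hst
  set p := 1/t with hpdef
  set q := 1/s with hqdef
  have hp : 0 < p := by positivity
  have hq : 0 < q := by positivity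
  have hpq : p ≤ q := one_div_le_one_div_of_le hs hst
  suffices h : fr c (1/q) ≤ fr c (1/p) by
    have h1 : (1:ℝ)/q = s := by rw [hqdef, one_div_one_div]
    have h2 : (1:ℝ)/p = t := by rw [hpdef, one_div_one_div]
    rw [h1, h2] at h
    exact (ENNReal.toReal_le_toReal (F_ne_top c hs) (F_ne_top c ht)).mp h
  by_contra hcon
  push_neg at hcon
  rcases eq_or_lt_of_le hpq with heq | hlt
  · rw [heq] at hcon; exact lt_irrefl _ hcon
  set r := q - p with hrdef
  have hr : 0 < r := by simp [hrdef]; linarith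
  set v : ℕ → ℝ := fun k => fr c (1/(p + k * r)) with hvdef
  have hpk : ∀ k : ℕ, 0 < p + k * r := fun k => by positivity
  have hvpos : ∀ k, 0 < v k := fun k => fr_pos c (by positivity)
  have hv0 : v 0 = fr c (1/p) := by simp [hvdef]
  have hv1 : v 1 = fr c (1/q) := by simp [hvdef, hrdef]
  have hmid : ∀ k : ℕ, v (k+1) ^ 2 ≤ v k * v (k+2) := by
    intro k
    have h := fr_mid c (hpk k) (hpk (k+2))
    have hx : 0 < p + ((k:ℝ)+1) * r := by
      have := hpk (k+1); push_cast at this; exact this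
    have he : 2/((p + (k:ℝ) * r) + (p + ((k:ℝ)+2) * r)) = 1/(p + ((k:ℝ)+1) * r) := by
      rw [div_eq_div_iff (by nlinarith) hx.ne']
      ring
    simp only [hvdef]
    push_cast at h ⊢
    rw [he] at h
    exact h
  set ρ := v 1 / v 0 with hρdef
  have hρ : 1 < ρ := (one_lt_div (hvpos 0)).mpr (by rw [hv0, hv1] at *; exact hcon)
  have hgrow : ∀ k : ℕ, v 0 * ρ ^ k ≤ v k ∧ ρ * v k ≤ v (k+1) := by
    intro k
    induction k with
    | zero => constructor
              · simp
              · rw [hρdef, div_mul_cancel₀ _ (hvpos 0).ne']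
    | succ k ih =>
      obtain ⟨ih1, ih2⟩ := ih
      constructor
      · calc v 0 * ρ ^ (k+1) = ρ * (v 0 * ρ ^ k) := by ring
          _ ≤ ρ * v k := by
              have := mul_le_mul_of_nonneg_left ih1 (le_of_lt (lt_trans one_pos hρ))
              linarith [this]
          _ ≤ v (k+1) := ih2
      · have hm := hmid k
        have h1 := hvpos k
        have h2 := hvpos (k+1)
        have h3 := hvpos (k+2)
        nlinarith [mul_le_mul_of_nonneg_left ih2 (le_of_lt h2)]
  obtain ⟨C, hC⟩ := fr_upper c p hp
  have hCk : ∀ k : ℕ, v k ≤ C := fun k => hC (p + k * r)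
    (by nlinarith [Nat.cast_nonneg (α := ℝ) k, hr])
  obtain ⟨k, hk⟩ := pow_unbounded_of_one_lt (C / v 0) hρ
  have h1 : C < v 0 * ρ ^ k := by
    rw [div_lt_iff₀ (hvpos 0)] at hk
    linarith [hk]
  have h2 := (hgrow k).1
  linarith [hCk k]


lemma T_ne_top {t : ℝ} (ht : 0 < t) : T c t ≠ ⊤ := by
  intro h
  apply F_ne_top c ht
  rw [F, h, ENNReal.mul_top]
  simp only [ne_eq, ENNReal.ofReal_eq_zero, not_le]
  positivity

lemma toReal_T (t : ℝ) :
    (T c t).toReal = ∑' m : Fin n → ℤ, Real.exp (-(Real.pi * t) * ‖lat c m‖ ^ 2) := by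
  rw [T, ENNReal.tsum_toReal_eq (fun m => by unfold gg; exact ENNReal.ofReal_ne_top)]
  exact tsum_congr fun m => by unfold gg; rw [ENNReal.toReal_ofReal (Real.exp_pos _).le]

theorem log_theta_add_half_rank_log_monotone
    {V : Type*} [NormedAddCommGroup V] [InnerProductSpace ℝ V]
    {n : ℕ} (b : Module.Basis (Fin n) ℝ V) :
    ∀ s t : ℝ, 0 < s → s ≤ t →
      Real.log (∑' m : Fin n → ℤ, Real.exp (-Real.pi * s * ‖∑ i, m i • b i‖ ^ 2))
          + (n / 2 : ℝ) * Real.log s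
        ≤ Real.log (∑' m : Fin n → ℤ, Real.exp (-Real.pi * t * ‖∑ i, m i • b i‖ ^ 2))
          + (n / 2 : ℝ) * Real.log t := by
  intro s t hs hst
  have ht : 0 < t := lt_of_lt_of_le hs hst
  have hVfd : FiniteDimensional ℝ V := Module.Finite.of_basis b
  have hn : Module.finrank ℝ V = n :=
    (Module.finrank_eq_card_basis b).trans (Fintype.card_fin n)
  let e : V ≃ₗᵢ[ℝ] EuclideanSpace ℝ (Fin n) :=
    (stdOrthonormalBasis ℝ V).repr.trans
      (LinearIsometryEquiv.piLpCongrLeft 2 ℝ ℝ (finCongr hn))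
  let c : Module.Basis (Fin n) ℝ (EuclideanSpace ℝ (Fin n)) := b.map e.toLinearEquiv
  have hnorm : ∀ m : Fin n → ℤ, ‖∑ i, m i • b i‖ = ‖lat c m‖ := by
    intro m
    have hlm : lat c m = e (∑ i, m i • b i) := by
      rw [lat, map_sum]
      exact Finset.sum_congr rfl fun i _ => by
        rw [map_zsmul]
        rfl
    rw [hlm, e.norm_map]
  have hsum : ∀ u : ℝ, (∑' m : Fin n → ℤ, Real.exp (-Real.pi * u * ‖∑ i, m i • b i‖ ^ 2))
      = (T c u).toReal := by
    intro u
    rw [toReal_T]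
    exact tsum_congr fun m => by rw [hnorm m, neg_mul]
  rw [hsum s, hsum t]
  have hθpos : ∀ u : ℝ, 0 < u → 0 < (T c u).toReal := fun u hu =>
    ENNReal.toReal_pos (T_ne_zero c) (T_ne_top c hu)
  have hF : (F c s).toReal ≤ (F c t).toReal :=
    ENNReal.toReal_mono (F_ne_top c ht) (F_mono c hs hst)
  rw [F, F, ENNReal.toReal_mul, ENNReal.toReal_mul,
    ENNReal.toReal_ofReal (Real.rpow_nonneg hs.le _),
    ENNReal.toReal_ofReal (Real.rpow_nonneg ht.le _)] at hF
  have key : ∀ u : ℝ, 0 < u →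
      Real.log ((T c u).toReal) + ((n : ℝ) / 2) * Real.log u
        = Real.log (u ^ ((n : ℝ)/2) * (T c u).toReal) := by
    intro u hu
    rw [Real.log_mul (by positivity) (hθpos u hu).ne', Real.log_rpow hu]
    ring
  rw [key s hs, key t ht]
  have hpos : 0 < s ^ ((n : ℝ)/2) * (T c s).toReal := by
    have := hθpos s hs
    positivity
  exact Real.log_le_log hpos hF
end

section
/- Let L be a full-rank lattice of rank n in a Euclidean space. For every t > n/(2π), one has (1 − n/(2πt)) · ∑_{v∈L} e^{−πt‖v‖²} ≤ ∑_{v∈L, ‖v‖<1} e^{−πt‖v‖²}. -/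
open MeasureTheory Real Filter Set

lemma int1d {a : ℝ} (ha : 0 < a) :
    ∫ x : ℝ, x ^ 2 * rexp (-a * x ^ 2) = (1 / (2 * a)) * ∫ x : ℝ, rexp (-a * x ^ 2) := by
  have h2 : ∀ x : ℝ, x ^ (2:ℝ) = x ^ 2 := fun x => by
    rw [show (2:ℝ) = ((2:ℕ):ℝ) by norm_num, Real.rpow_natCast]
  have I2 : Integrable fun x : ℝ => x ^ 2 * rexp (-a * x ^ 2) := by
    have := integrable_rpow_mul_exp_neg_mul_sq ha (by norm_num : (-1:ℝ) < 2)
    simpa only [h2] using this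
  have I0 : Integrable fun x : ℝ => rexp (-a * x ^ 2) := integrable_exp_neg_mul_sq ha
  set g : ℝ → ℝ := fun x => x * rexp (-a * x ^ 2) with hg
  set g' : ℝ → ℝ := fun x => rexp (-a * x ^ 2) - 2 * a * (x ^ 2 * rexp (-a * x ^ 2)) with hg'
  have hder : ∀ x : ℝ, HasDerivAt g (g' x) x := by
    intro x
    have h1 : HasDerivAt (fun x : ℝ => -a * x ^ 2) (-a * (2 * x)) x := by
      simpa using ((hasDerivAt_pow 2 x).const_mul (-a))
    have h2' : HasDerivAt (fun x : ℝ => rexp (-a * x ^ 2)) (rexp (-a * x ^ 2) * (-a * (2 * x))) x :=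
      h1.exp
    have : HasDerivAt g _ x := (hasDerivAt_id x).mul h2'
    convert this using 1
    simp [hg']; ring
  have Ig' : Integrable g' := I0.sub (I2.const_mul (2 * a))
  have htop : Tendsto g atTop (nhds 0) := by
    have hcomp : Tendsto (fun x : ℝ => a * x) atTop atTop :=
      Tendsto.const_mul_atTop ha tendsto_id
    have hlim0 := (tendsto_pow_mul_exp_neg_atTop_nhds_zero 1).comp hcomp
    have hlim : Tendsto (fun x : ℝ => (1/a) * ((a*x) ^ 1 * rexp (-(a * x)))) atTop (nhds 0) := by
      simpa using hlim0.const_mul (1/a)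
    refine squeeze_zero' ?_ ?_ hlim
    · filter_upwards [eventually_gt_atTop (0:ℝ)] with x hx
      have := exp_pos (-a * x ^ 2)
      simp only [hg]; positivity
    · filter_upwards [eventually_ge_atTop (1:ℝ)] with x hx
      have hx2 : x ≤ x ^ 2 := by nlinarith [sq_nonneg (x - 1)]
      have hxx : a * x ≤ a * x ^ 2 := by nlinarith
      have hee : rexp (-a * x ^ 2) ≤ rexp (-(a * x)) := exp_le_exp.2 (by linarith)
      have : (1/a) * ((a*x) ^ 1 * rexp (-(a * x))) = x * rexp (-(a*x)) := by
        field_simp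
      rw [this]
      simp only [hg]
      exact mul_le_mul_of_nonneg_left hee (by linarith)
  have hbot : Tendsto g atBot (nhds 0) := by
    have h1 : Tendsto (fun x : ℝ => g (-x)) atTop (nhds 0) := by
      have he : (fun x : ℝ => g (-x)) = fun x => -g x := by
        funext x; simp [hg]
      rw [he]; simpa using htop.neg
    have h2' := h1.comp tendsto_neg_atBot_atTop
    have : ((fun x : ℝ => g (-x)) ∘ Neg.neg) = g := by funext x; simp
    rwa [this] at h2'
  have hIoi : ∫ x in Ioi (0:ℝ), g' x = 0 - g 0 :=
    integral_Ioi_of_hasDerivAt_of_tendsto (hder 0).continuousAt.continuousWithinAt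
      (fun x _ => hder x) Ig'.integrableOn htop
  have hIic : ∫ x in Iic (0:ℝ), g' x = g 0 - 0 :=
    integral_Iic_of_hasDerivAt_of_tendsto (hder 0).continuousAt.continuousWithinAt
      (fun x _ => hder x) Ig'.integrableOn hbot
  have hsplit : (∫ x in Iic (0:ℝ), g' x) + ∫ x in Ioi (0:ℝ), g' x = ∫ x : ℝ, g' x :=
    intervalIntegral.integral_Iic_add_Ioi Ig'.integrableOn Ig'.integrableOn
  have hzero : ∫ x : ℝ, g' x = 0 := by rw [← hsplit, hIoi, hIic]; ring
  have hkey : (∫ x : ℝ, rexp (-a * x ^ 2))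
      - 2 * a * ∫ x : ℝ, x ^ 2 * rexp (-a * x ^ 2) = 0 := by
    rw [← MeasureTheory.integral_const_mul, ← integral_sub I0 (I2.const_mul _)]
    exact hzero
  have h3 : (2 * a) * (∫ x : ℝ, x ^ 2 * rexp (-a * x ^ 2)) = ∫ x : ℝ, rexp (-a * x ^ 2) := by
    linarith
  rw [← h3, ← mul_assoc, one_div, inv_mul_cancel₀ (by positivity), one_mul]
variable {n : ℕ}

lemma normsq_eq (w : EuclideanSpace ℝ (Fin n)) : ‖w‖ ^ 2 = ∑ i, (w i) ^ 2 := by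
  rw [EuclideanSpace.norm_eq, sq_sqrt (by positivity)]
  exact Finset.sum_congr rfl fun i _ => by rw [Real.norm_eq_abs, sq_abs]

lemma integral_transfer (G : EuclideanSpace ℝ (Fin n) → ℝ) :
    ∫ w : EuclideanSpace ℝ (Fin n), G w
      = ∫ x : Fin n → ℝ, G ((MeasurableEquiv.toLp 2 (Fin n → ℝ)) x) :=
  (((EuclideanSpace.volume_preserving_symm_measurableEquiv_toLp (Fin n)).symm
      (MeasurableEquiv.toLp 2 (Fin n → ℝ)).symm).integral_comp
    (MeasurableEquiv.measurableEmbedding _) G).symm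

lemma integrable_transfer (G : EuclideanSpace ℝ (Fin n) → ℝ) :
    Integrable G ↔ Integrable
      (fun x : Fin n → ℝ => G ((MeasurableEquiv.toLp 2 (Fin n → ℝ)) x)) :=
  (((EuclideanSpace.volume_preserving_symm_measurableEquiv_toLp (Fin n)).symm
      (MeasurableEquiv.toLp 2 (Fin n → ℝ)).symm).integrable_comp_emb
    (MeasurableEquiv.measurableEmbedding _) (g := G)).symm

lemma symm_apply_coord (x : Fin n → ℝ) (i : Fin n) :
    ((MeasurableEquiv.toLp 2 (Fin n → ℝ)) x) i = x i := rfl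

lemma pointwise_exp (a : ℝ) (x : Fin n → ℝ) :
    rexp (-a * ‖(MeasurableEquiv.toLp 2 (Fin n → ℝ)) x‖ ^ 2)
      = ∏ i, rexp (-a * (x i) ^ 2) := by
  rw [normsq_eq, Finset.mul_sum, Real.exp_sum]; rfl

lemma IE0 {a : ℝ} (ha : 0 < a) :
    Integrable (fun w : EuclideanSpace ℝ (Fin n) => rexp (-a * ‖w‖ ^ 2)) := by
  rw [integrable_transfer]
  have : (fun x : Fin n → ℝ =>
      rexp (-a * ‖(MeasurableEquiv.toLp 2 (Fin n → ℝ)) x‖ ^ 2))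
      = fun x => ∏ i, rexp (-a * (x i) ^ 2) := funext fun x => pointwise_exp a x
  rw [this]
  exact Integrable.fintype_prod fun i => integrable_exp_neg_mul_sq ha

-- per-coordinate factor
private noncomputable def fc (a : ℝ) (i j : Fin n) : ℝ → ℝ :=
  fun y => (if j = i then y ^ 2 else 1) * rexp (-a * y ^ 2)

lemma fc_integrable {a : ℝ} (ha : 0 < a) (i j : Fin n) : Integrable (fc a i j) := by
  unfold fc
  by_cases h : j = i
  · simp only [h, if_pos rfl, ite_true]
    have := integrable_rpow_mul_exp_neg_mul_sq ha (by norm_num : (-1:ℝ) < 2)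
    have h2 : ∀ x : ℝ, x ^ (2:ℝ) = x ^ 2 := fun x => by
      rw [show (2:ℝ) = ((2:ℕ):ℝ) by norm_num, Real.rpow_natCast]
    simpa only [h2] using this
  · simp only [if_neg h, one_mul]
    exact integrable_exp_neg_mul_sq ha

lemma prod_fc (a : ℝ) (i : Fin n) (x : Fin n → ℝ) :
    ∏ j, fc a i j (x j) = (x i) ^ 2 * ∏ j, rexp (-a * (x j) ^ 2) := by
  unfold fc
  rw [Finset.prod_mul_distrib]
  congr 1
  rw [Finset.prod_ite_eq' Finset.univ i (fun j => (x j) ^ 2)]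
  simp

lemma pointwise_sq_exp (a : ℝ) (x : Fin n → ℝ) :
    ‖(MeasurableEquiv.toLp 2 (Fin n → ℝ)) x‖ ^ 2
        * rexp (-a * ‖(MeasurableEquiv.toLp 2 (Fin n → ℝ)) x‖ ^ 2)
      = ∑ i, ∏ j, fc a i j (x j) := by
  rw [pointwise_exp, normsq_eq]
  simp_rw [prod_fc]
  rw [← Finset.sum_mul]; rfl

lemma IE2 {a : ℝ} (ha : 0 < a) :
    Integrable (fun w : EuclideanSpace ℝ (Fin n) => ‖w‖ ^ 2 * rexp (-a * ‖w‖ ^ 2)) := by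
  rw [integrable_transfer]
  have : (fun x : Fin n → ℝ => ‖(MeasurableEquiv.toLp 2 (Fin n → ℝ)) x‖ ^ 2
      * rexp (-a * ‖(MeasurableEquiv.toLp 2 (Fin n → ℝ)) x‖ ^ 2))
      = fun x => ∑ i, ∏ j, fc a i j (x j) := funext fun x => pointwise_sq_exp a x
  rw [this]
  exact integrable_finset_sum _ fun i _ => Integrable.fintype_prod fun j => fc_integrable ha i j

lemma VE2 {a : ℝ} (ha : 0 < a) :
    ∫ w : EuclideanSpace ℝ (Fin n), ‖w‖ ^ 2 * rexp (-a * ‖w‖ ^ 2)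
      = ((n : ℝ) / (2 * a)) * ∫ w : EuclideanSpace ℝ (Fin n), rexp (-a * ‖w‖ ^ 2) := by
  rw [integral_transfer, integral_transfer (fun w => rexp (-a * ‖w‖ ^ 2))]
  simp_rw [pointwise_sq_exp a, pointwise_exp a]
  rw [integral_finset_sum (μ := (volume : Measure (Fin n → ℝ))) _ fun i _ => Integrable.fintype_prod fun j => fc_integrable ha i j]
  rw [(by rw [volume_pi]; exact integral_fintype_prod_eq_prod (ι := Fin n) (fun _ y => rexp (-a * y ^ 2)) :
    ∫ x : Fin n → ℝ, ∏ i, rexp (-a * x i ^ 2) = ∏ _i : Fin n, ∫ y : ℝ, rexp (-a * y ^ 2))]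
  have hterm : ∀ i : Fin n, (∫ x : Fin n → ℝ, ∏ j, fc a i j (x j))
      = (1 / (2 * a)) * ∏ _j : Fin n, ∫ y : ℝ, rexp (-a * y ^ 2) := by
    intro i
    rw [(by rw [volume_pi]; exact integral_fintype_prod_eq_prod (ι := Fin n) (fc a i) :
      ∫ x : Fin n → ℝ, ∏ j, fc a i j (x j) = ∏ j, ∫ y : ℝ, fc a i j y)]
    set B := ∫ y : ℝ, rexp (-a * y ^ 2) with hB
    have hci : (∫ y : ℝ, fc a i i y) = (1 / (2 * a)) * B := by
      unfold fc; simp only [if_pos rfl]; exact int1d ha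
    have hcj : ∀ j ∈ Finset.univ.erase i, (∫ y : ℝ, fc a i j y) = B := by
      intro j hj
      have : j ≠ i := (Finset.mem_erase.1 hj).1
      unfold fc; simp only [if_neg this, one_mul]; rfl
    rw [← Finset.mul_prod_erase Finset.univ _ (Finset.mem_univ i), hci,
      Finset.prod_congr rfl hcj, Finset.prod_const]
    rw [← Finset.mul_prod_erase Finset.univ (fun _ => B) (Finset.mem_univ i),
      Finset.prod_const]
    ring
  rw [Finset.sum_congr rfl fun i _ => hterm i, Finset.sum_const, Finset.card_univ,
    Fintype.card_fin, nsmul_eq_mul]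
  ring

section Key

variable {t : ℝ}

local notation "En" => EuclideanSpace ℝ (Fin n)

-- pointwise translation identity
lemma key_pointwise (x y z : EuclideanSpace ℝ (Fin n)) (t : ℝ) :
    (inner ℝ (x - (((2:ℝ)⁻¹ • (x + y)) + z)) (y - (((2:ℝ)⁻¹ • (x + y)) + z)) : ℝ)
        * rexp (-(2 * π * t) * (‖x - (((2:ℝ)⁻¹ • (x + y)) + z)‖ ^ 2
            + ‖y - (((2:ℝ)⁻¹ • (x + y)) + z)‖ ^ 2))
      = rexp (-(4 * π * t) * ‖(2:ℝ)⁻¹ • (x - y)‖ ^ 2)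
          * ((‖z‖ ^ 2 - ‖(2:ℝ)⁻¹ • (x - y)‖ ^ 2) * rexp (-(4 * π * t) * ‖z‖ ^ 2)) := by
  set d : EuclideanSpace ℝ (Fin n) := (2:ℝ)⁻¹ • (x - y) with hd
  have e1 : x - (((2:ℝ)⁻¹ • (x + y)) + z) = d - z := by rw [hd]; module
  have e2 : y - (((2:ℝ)⁻¹ • (x + y)) + z) = -(d + z) := by rw [hd]; module
  rw [e1, e2]
  have hinner : (inner ℝ (d - z) (-(d + z)) : ℝ) = ‖z‖ ^ 2 - ‖d‖ ^ 2 := by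
    rw [inner_neg_right, inner_add_right, inner_sub_left, inner_sub_left,
      real_inner_self_eq_norm_sq, real_inner_self_eq_norm_sq, real_inner_comm z d]
    ring
  have hnorm : ‖d - z‖ ^ 2 + ‖-(d + z)‖ ^ 2 = 2 * ‖d‖ ^ 2 + 2 * ‖z‖ ^ 2 := by
    rw [norm_neg, norm_add_sq_real, norm_sub_sq_real]
    ring
  rw [hinner, hnorm]
  rw [show -(2 * π * t) * (2 * ‖d‖ ^ 2 + 2 * ‖z‖ ^ 2)
      = (-(4 * π * t) * ‖d‖ ^ 2) + (-(4 * π * t) * ‖z‖ ^ 2) by ring, Real.exp_add]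
  ring

lemma key_integrable (ht : 0 < t) (x y : EuclideanSpace ℝ (Fin n)) :
    Integrable (fun z : EuclideanSpace ℝ (Fin n) =>
      (inner ℝ (x - z) (y - z) : ℝ) * rexp (-(2 * π * t) * (‖x - z‖ ^ 2 + ‖y - z‖ ^ 2))) := by
  have h4 : 0 < 4 * π * t := by positivity
  set c : EuclideanSpace ℝ (Fin n) := (2:ℝ)⁻¹ • (x + y) with hc
  set d : EuclideanSpace ℝ (Fin n) := (2:ℝ)⁻¹ • (x - y) with hd
  have hI : Integrable (fun z : EuclideanSpace ℝ (Fin n) =>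
      rexp (-(4 * π * t) * ‖d‖ ^ 2)
        * ((‖z‖ ^ 2 - ‖d‖ ^ 2) * rexp (-(4 * π * t) * ‖z‖ ^ 2))) := by
    refine Integrable.const_mul ?_ _
    have := (IE2 (n := n) h4).sub ((IE0 (n := n) h4).const_mul (‖d‖ ^ 2))
    refine this.congr (Eventually.of_forall fun z => ?_)
    simp only [Pi.sub_apply]; ring
  have hIc : Integrable (fun z : EuclideanSpace ℝ (Fin n) =>
      (inner ℝ (x - (c + z)) (y - (c + z)) : ℝ)
        * rexp (-(2 * π * t) * (‖x - (c + z)‖ ^ 2 + ‖y - (c + z)‖ ^ 2))) := by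
    refine hI.congr (Eventually.of_forall fun z => ?_)
    exact (key_pointwise x y z t).symm
  have := hIc.comp_add_left (-c)
  refine this.congr (Eventually.of_forall fun z => ?_)
  simp only [← add_assoc]
  norm_num
end Key

section Key2
variable {t : ℝ}

lemma key_identity_s7 (ht : 0 < t) (x y : EuclideanSpace ℝ (Fin n)) :
    ∫ z : EuclideanSpace ℝ (Fin n),
        (inner ℝ (x - z) (y - z) : ℝ) * rexp (-(2 * π * t) * (‖x - z‖ ^ 2 + ‖y - z‖ ^ 2))
      = ((∫ w : EuclideanSpace ℝ (Fin n), rexp (-(4 * π * t) * ‖w‖ ^ 2)) / 4)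
          * (((n : ℝ) / (2 * π * t) - ‖x - y‖ ^ 2) * rexp (-(π * t) * ‖x - y‖ ^ 2)) := by
  have h4 : 0 < 4 * π * t := by positivity
  set c : EuclideanSpace ℝ (Fin n) := (2:ℝ)⁻¹ • (x + y) with hc
  set d : EuclideanSpace ℝ (Fin n) := (2:ℝ)⁻¹ • (x - y) with hd
  set M₀ : ℝ := ∫ w : EuclideanSpace ℝ (Fin n), rexp (-(4 * π * t) * ‖w‖ ^ 2) with hM₀
  rw [← integral_add_left_eq_self (fun z : EuclideanSpace ℝ (Fin n) =>
      (inner ℝ (x - z) (y - z) : ℝ) * rexp (-(2 * π * t) * (‖x - z‖ ^ 2 + ‖y - z‖ ^ 2))) c]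
  have hpt : ∀ z : EuclideanSpace ℝ (Fin n),
      (inner ℝ (x - (c + z)) (y - (c + z)) : ℝ)
        * rexp (-(2 * π * t) * (‖x - (c + z)‖ ^ 2 + ‖y - (c + z)‖ ^ 2))
      = rexp (-(4 * π * t) * ‖d‖ ^ 2)
          * ((‖z‖ ^ 2 - ‖d‖ ^ 2) * rexp (-(4 * π * t) * ‖z‖ ^ 2)) :=
    fun z => key_pointwise x y z t
  simp_rw [hpt]
  rw [MeasureTheory.integral_const_mul]
  have hsub : ∫ z : EuclideanSpace ℝ (Fin n),
      (‖z‖ ^ 2 - ‖d‖ ^ 2) * rexp (-(4 * π * t) * ‖z‖ ^ 2)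
      = ((n : ℝ) / (2 * (4 * π * t))) * M₀ - ‖d‖ ^ 2 * M₀ := by
    have heq : (fun z : EuclideanSpace ℝ (Fin n) =>
        (‖z‖ ^ 2 - ‖d‖ ^ 2) * rexp (-(4 * π * t) * ‖z‖ ^ 2))
        = fun z => ‖z‖ ^ 2 * rexp (-(4 * π * t) * ‖z‖ ^ 2)
            - ‖d‖ ^ 2 * rexp (-(4 * π * t) * ‖z‖ ^ 2) := by
      funext z; ring
    rw [heq, integral_sub (IE2 h4) ((IE0 h4).const_mul _), VE2 h4,
      MeasureTheory.integral_const_mul]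
  rw [hsub]
  have hd2 : ‖d‖ ^ 2 = ‖x - y‖ ^ 2 / 4 := by
    rw [hd, norm_smul]
    simp [abs_of_nonneg]
    ring
  have hexp : rexp (-(4 * π * t) * ‖d‖ ^ 2) = rexp (-(π * t) * ‖x - y‖ ^ 2) := by
    rw [hd2]; ring_nf
  rw [hexp, hd2]
  have hπ : (π : ℝ) ≠ 0 := ne_of_gt pi_pos
  have ht' : t ≠ 0 := ne_of_gt ht
  field_simp

lemma M0_pos (ht : 0 < t) :
    0 < ∫ w : EuclideanSpace ℝ (Fin n), rexp (-(4 * π * t) * ‖w‖ ^ 2) := by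
  have h4 : 0 < 4 * π * t := by positivity
  rw [GaussianFourier.integral_rexp_neg_mul_sq_norm h4]
  exact Real.rpow_pos_of_pos (by positivity) _

lemma psd (ht : 0 < t) (s : Finset (Fin n → ℤ)) (q : (Fin n → ℤ) → EuclideanSpace ℝ (Fin n)) :
    0 ≤ ∑ x ∈ s, ∑ y ∈ s,
      ((n : ℝ) / (2 * π * t) - ‖q x - q y‖ ^ 2) * rexp (-(π * t) * ‖q x - q y‖ ^ 2) := by
  set M₀ : ℝ := ∫ w : EuclideanSpace ℝ (Fin n), rexp (-(4 * π * t) * ‖w‖ ^ 2) with hM₀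
  have hM : 0 < M₀ := M0_pos ht
  have hterm : ∀ x y : Fin n → ℤ,
      ((n : ℝ) / (2 * π * t) - ‖q x - q y‖ ^ 2) * rexp (-(π * t) * ‖q x - q y‖ ^ 2)
      = (4 / M₀) * ∫ z : EuclideanSpace ℝ (Fin n),
          (inner ℝ (q x - z) (q y - z) : ℝ)
            * rexp (-(2 * π * t) * (‖q x - z‖ ^ 2 + ‖q y - z‖ ^ 2)) := by
    intro x y
    rw [key_identity_s7 ht, ← hM₀]
    field_simp
  calc (0:ℝ) ≤ (4 / M₀) * ∫ z : EuclideanSpace ℝ (Fin n), ∑ x ∈ s, ∑ y ∈ s,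
        (inner ℝ (q x - z) (q y - z) : ℝ)
          * rexp (-(2 * π * t) * (‖q x - z‖ ^ 2 + ‖q y - z‖ ^ 2)) := by
        refine mul_nonneg (by positivity) (integral_nonneg fun z => ?_)
        have hrw : ∀ x y : Fin n → ℤ,
            (inner ℝ (q x - z) (q y - z) : ℝ)
              * rexp (-(2 * π * t) * (‖q x - z‖ ^ 2 + ‖q y - z‖ ^ 2))
            = (inner ℝ (rexp (-(2 * π * t) * ‖q x - z‖ ^ 2) • (q x - z))
                (rexp (-(2 * π * t) * ‖q y - z‖ ^ 2) • (q y - z)) : ℝ) := by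
          intro x y
          rw [real_inner_smul_left, real_inner_smul_right,
            show -(2 * π * t) * (‖q x - z‖ ^ 2 + ‖q y - z‖ ^ 2)
              = -(2 * π * t) * ‖q x - z‖ ^ 2 + -(2 * π * t) * ‖q y - z‖ ^ 2 by ring,
            Real.exp_add]
          ring
        have h0 : (0:ℝ) ≤ inner ℝ (∑ x ∈ s, rexp (-(2 * π * t) * ‖q x - z‖ ^ 2) • (q x - z))
            (∑ x ∈ s, rexp (-(2 * π * t) * ‖q x - z‖ ^ 2) • (q x - z)) :=
          real_inner_self_nonneg
        rw [sum_inner] at h0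
        simp_rw [inner_sum] at h0
        refine le_of_le_of_eq h0 ?_
        exact Finset.sum_congr rfl fun x _ => Finset.sum_congr rfl fun y _ => (hrw x y).symm
    _ = ∑ x ∈ s, ∑ y ∈ s,
        ((n : ℝ) / (2 * π * t) - ‖q x - q y‖ ^ 2) * rexp (-(π * t) * ‖q x - q y‖ ^ 2) := by
        rw [integral_finset_sum _ fun x _ =>
          integrable_finset_sum _ fun y _ => key_integrable ht (q x) (q y)]
        rw [Finset.mul_sum]
        refine Finset.sum_congr rfl fun x _ => ?_
        rw [integral_finset_sum _ fun y _ => key_integrable ht (q x) (q y), Finset.mul_sum]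
        exact Finset.sum_congr rfl fun y _ => (hterm x y).symm
end Key2


lemma summable_box {u : ℤ → ℝ} (hu0 : ∀ k, 0 ≤ u k) (hu : Summable u) :
    Summable (fun m : Fin n → ℤ => ∏ i, u (m i)) := by
  refine summable_of_sum_le (c := (∑' k, u k) ^ n)
    (fun m => Finset.prod_nonneg fun i _ => hu0 _) (fun F => ?_)
  have hsub : F ⊆ Fintype.piFinset fun i => F.image (fun m => m i) := by
    intro m hm
    rw [Fintype.mem_piFinset]
    exact fun i => Finset.mem_image_of_mem _ hm
  calc ∑ m ∈ F, ∏ i, u (m i)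
      ≤ ∑ m ∈ Fintype.piFinset fun i => F.image (fun m => m i), ∏ i, u (m i) :=
        Finset.sum_le_sum_of_subset_of_nonneg hsub
          (fun m _ _ => Finset.prod_nonneg fun i _ => hu0 _)
    _ = ∏ i : Fin n, ∑ k ∈ F.image (fun m => m i), u k :=
        (Finset.prod_univ_sum _ _).symm
    _ ≤ ∏ _i : Fin n, ∑' k, u k := by
        refine Finset.prod_le_prod (fun i _ => Finset.sum_nonneg fun k _ => hu0 _)
          (fun i _ => Summable.sum_le_tsum _ (fun k _ => hu0 _) hu)
    _ = (∑' k, u k) ^ n := by rw [Finset.prod_const, Finset.card_univ, Fintype.card_fin]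

lemma summable_exp_neg_int_sq {β : ℝ} (hβ : 0 < β) :
    Summable fun k : ℤ => rexp (-β * (k : ℝ) ^ 2) := by
  have hnat : Summable fun k : ℕ => rexp (-β * (k : ℝ) ^ 2) := by
    refine Summable.of_nonneg_of_le (fun k => (exp_pos _).le) (fun k => ?_)
      (summable_geometric_of_lt_one (exp_pos (-β)).le (exp_lt_one_iff.2 (by linarith)))
    rw [← Real.exp_nat_mul]
    apply exp_le_exp.2
    have h1 : (k : ℝ) ≤ (k : ℝ) ^ 2 := by
      rcases Nat.eq_zero_or_pos k with h | h
      · simp [h]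
      · nlinarith [(Nat.one_le_cast (α := ℝ)).2 h]
    nlinarith
  apply Summable.of_nat_of_neg <;> simpa using hnat

section Fejer

variable (n)

private noncomputable def BB (R : ℕ) : Finset (Fin n → ℤ) :=
  Fintype.piFinset fun _ => Finset.Icc (-(R : ℤ)) (R : ℤ)

private noncomputable def DD (R : ℕ) : Finset (Fin n → ℤ) :=
  Fintype.piFinset fun _ => Finset.Icc (-(2 * R : ℤ)) (2 * R : ℤ)

private noncomputable def NN (R : ℕ) (m : Fin n → ℤ) : ℕ :=
  ((BB n R).filter fun x => x - m ∈ BB n R).card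

variable {n}

lemma card_box (a : ℤ) (ha : 0 ≤ a) :
    (((Fintype.piFinset fun _ : Fin n => Finset.Icc (-a) a).card : ℝ))
      = (2 * (a : ℝ) + 1) ^ n := by
  rw [Fintype.card_piFinset]
  simp only [Int.card_Icc]
  rw [Finset.prod_const, Finset.card_univ, Fintype.card_fin]
  have : ((a + 1 - -a).toNat : ℝ) = 2 * (a : ℝ) + 1 := by
    have h1 : a + 1 - -a = 2 * a + 1 := by ring
    rw [h1, show ((2 * a + 1).toNat : ℝ) = ((((2 * a + 1).toNat : ℤ)) : ℝ) by push_cast; ring,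
      Int.toNat_of_nonneg (by omega)]
    push_cast; ring
  rw [Nat.cast_pow, this]

lemma NN_eq_zero {R : ℕ} {m : Fin n → ℤ} (hm : m ∉ DD n R) : NN n R m = 0 := by
  rw [NN, Finset.card_eq_zero, Finset.filter_eq_empty_iff]
  intro x hx
  intro hxm
  apply hm
  rw [DD, Fintype.mem_piFinset]
  intro i
  rw [BB, Fintype.mem_piFinset] at hx hxm
  have h1 := hx i
  have h2 := hxm i
  simp only [Finset.mem_Icc, Pi.sub_apply] at h1 h2 ⊢
  omega

lemma NN_le_card (R : ℕ) (m : Fin n → ℤ) : NN n R m ≤ (BB n R).card :=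
  Finset.card_le_card (Finset.filter_subset _ _)

lemma card_BB_pos (R : ℕ) : 0 < (BB n R).card := by
  rw [Finset.card_pos]
  exact ⟨fun _ => 0, by rw [BB, Fintype.mem_piFinset]; intro i; simp⟩

lemma count_identity (R : ℕ) (F : (Fin n → ℤ) → ℝ) :
    ∑ m ∈ DD n R, (NN n R m : ℝ) * F m = ∑ x ∈ BB n R, ∑ y ∈ BB n R, F (x - y) := by
  have inner_eq : ∀ x ∈ BB n R, ∑ y ∈ BB n R, F (x - y)
      = ∑ m ∈ DD n R, if x - m ∈ BB n R then F m else 0 := by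
    intro x hx
    rw [← Finset.sum_filter]
    refine Finset.sum_nbij' (fun y => x - y) (fun m => x - m) ?_ ?_ ?_ ?_ ?_
    · intro y hy
      rw [Finset.mem_filter]
      constructor
      · rw [DD, Fintype.mem_piFinset]
        intro i
        rw [BB, Fintype.mem_piFinset] at hx hy
        have h1 := hx i; have h2 := hy i
        simp only [Finset.mem_Icc, Pi.sub_apply] at h1 h2 ⊢
        omega
      · simpa using hy
    · intro m hm
      exact (Finset.mem_filter.1 hm).2
    · intro y _; simp
    · intro m _; simp
    · intro y _; simp
  rw [Finset.sum_congr rfl inner_eq, Finset.sum_comm]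
  refine Finset.sum_congr rfl fun m _ => ?_
  rw [← Finset.sum_filter, Finset.sum_const, NN, nsmul_eq_mul]

lemma tsum_nonneg_of_psd (h : (Fin n → ℤ) → ℝ)
    (hpsd : ∀ s : Finset (Fin n → ℤ), 0 ≤ ∑ x ∈ s, ∑ y ∈ s, h (x - y))
    (hsum : Summable fun m => |h m|) : 0 ≤ ∑' m, h m := by
  have hsum' : Summable h := by
    refine hsum.of_norm_bounded fun m => ?_
    rw [Real.norm_eq_abs]
  set w : ℕ → (Fin n → ℤ) → ℝ := fun R m => (NN n R m : ℝ) / ((BB n R).card : ℝ) with hw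
  set f : ℕ → (Fin n → ℤ) → ℝ := fun R m => w R m * h m with hf
  have hcardpos : ∀ R, (0:ℝ) < ((BB n R).card : ℝ) :=
    fun R => by exact_mod_cast card_BB_pos R
  have hw01 : ∀ R m, 0 ≤ w R m ∧ w R m ≤ 1 := by
    intro R m
    constructor
    · positivity
    · rw [div_le_one (hcardpos R)]
      exact_mod_cast NN_le_card R m
  -- each truncated sum is nonneg
  have htsum_nonneg : ∀ R, 0 ≤ ∑' m, f R m := by
    intro R
    have hsupp : ∀ m ∉ DD n R, f R m = 0 := by
      intro m hm
      simp [hf, hw, NN_eq_zero hm]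
    rw [tsum_eq_sum hsupp]
    have : ∑ m ∈ DD n R, f R m
        = (((BB n R).card : ℝ))⁻¹ * ∑ m ∈ DD n R, (NN n R m : ℝ) * h m := by
      rw [Finset.mul_sum]
      exact Finset.sum_congr rfl fun m _ => by rw [hf, hw]; ring
    rw [this, count_identity R h]
    exact mul_nonneg (by positivity) (hpsd _)
  -- pointwise convergence of w to 1
  have hwtend : ∀ m, Tendsto (fun R => w R m) atTop (nhds 1) := by
    intro m
    set K : ℕ := Finset.univ.sup fun i => (m i).natAbs with hK
    have hKi : ∀ i, (m i).natAbs ≤ K := fun i => Finset.le_sup (f := fun i => (m i).natAbs) (Finset.mem_univ i)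
    have hlow : ∀ R : ℕ, K ≤ R →
        ((2 * ((R : ℝ) - K) + 1) / (2 * (R : ℝ) + 1)) ^ n ≤ w R m := by
      intro R hR
      have hRK : (0:ℤ) ≤ (R : ℤ) - K := by omega
      have hsub : (Fintype.piFinset fun _ : Fin n => Finset.Icc (-((R:ℤ) - K)) ((R:ℤ) - K))
          ⊆ (BB n R).filter fun x => x - m ∈ BB n R := by
        intro x hx
        rw [Fintype.mem_piFinset] at hx
        rw [Finset.mem_filter]
        constructor
        · rw [BB, Fintype.mem_piFinset]
          intro i
          have h1 := hx i
          simp only [Finset.mem_Icc] at h1 ⊢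
          omega
        · rw [BB, Fintype.mem_piFinset]
          intro i
          have h1 := hx i
          have h2 := hKi i
          simp only [Finset.mem_Icc, Pi.sub_apply] at h1 ⊢
          omega
      have hcard : ((2 * ((R:ℝ) - K) + 1)) ^ n ≤ (NN n R m : ℝ) := by
        have := Finset.card_le_card hsub
        have hc := card_box ((R:ℤ) - K) hRK (n := n)
        calc ((2 * ((R:ℝ) - K) + 1)) ^ n
            = (((Fintype.piFinset fun _ : Fin n =>
                Finset.Icc (-((R:ℤ) - K)) ((R:ℤ) - K)).card : ℝ)) := by
              rw [hc]; push_cast; ring_nf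
          _ ≤ (NN n R m : ℝ) := by exact_mod_cast this
      have hBcard : ((BB n R).card : ℝ) = (2 * (R:ℝ) + 1) ^ n := by
        have := card_box (R : ℤ) (by positivity) (n := n)
        rw [BB]
        rw [this]  -- casts
        push_cast; ring_nf
      simp only [hw]
      rw [hBcard, div_pow]
      gcongr
    have h1 : Tendsto (fun R : ℕ => (2 * (R:ℝ) + 1)) atTop atTop := by
      apply tendsto_atTop_add_const_right
      exact Tendsto.const_mul_atTop two_pos tendsto_natCast_atTop_atTop
    have h2 : Tendsto (fun R : ℕ => (2 * (K:ℝ)) / (2 * (R:ℝ) + 1)) atTop (nhds 0) :=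
      Tendsto.div_atTop tendsto_const_nhds h1
    have h3 : Tendsto (fun R : ℕ => (2 * ((R:ℝ) - K) + 1) / (2 * (R:ℝ) + 1)) atTop (nhds 1) := by
      have heq : ∀ R : ℕ, (2 * ((R:ℝ) - K) + 1) / (2 * (R:ℝ) + 1)
          = 1 - (2 * (K:ℝ)) / (2 * (R:ℝ) + 1) := by
        intro R
        have hpos : (2 * (R:ℝ) + 1) ≠ 0 := by positivity
        field_simp
        ring
      simp only [heq]
      simpa using (tendsto_const_nhds (x := (1:ℝ))).sub h2
    have h4 : Tendsto (fun R : ℕ => ((2 * ((R:ℝ) - K) + 1) / (2 * (R:ℝ) + 1)) ^ n)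
        atTop (nhds 1) := by
      simpa using h3.pow n
    refine tendsto_of_tendsto_of_tendsto_of_le_of_le' h4 tendsto_const_nhds ?_ ?_
    · filter_upwards [eventually_ge_atTop K] with R hR
      exact hlow R hR
    · exact Eventually.of_forall fun R => (hw01 R m).2
  have hftend : ∀ m, Tendsto (fun R => f R m) atTop (nhds (h m)) := by
    intro m
    have := (hwtend m).mul_const (h m)
    simpa using this
  have hbound : ∀ᶠ R in atTop, ∀ m, ‖f R m‖ ≤ |h m| := by
    refine Eventually.of_forall fun R m => ?_
    rw [Real.norm_eq_abs, hf, abs_mul]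
    have h01 := hw01 R m
    calc |w R m| * |h m| ≤ 1 * |h m| := by
          apply mul_le_mul_of_nonneg_right _ (abs_nonneg _)
          rw [abs_of_nonneg h01.1]; exact h01.2
      _ = |h m| := one_mul _
  have hT := tendsto_tsum_of_dominated_convergence hsum hftend hbound
  exact ge_of_tendsto' hT htsum_nonneg
end Fejer


theorem banaszczyk_truncation
    {V : Type*} [NormedAddCommGroup V] [InnerProductSpace ℝ V]
    {n : ℕ} (b : Module.Basis (Fin n) ℝ V) (t : ℝ) (ht : n / (2 * Real.pi) < t) :
    (1 - n / (2 * Real.pi * t)) *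
        (∑' m : Fin n → ℤ, Real.exp (-Real.pi * t * ‖∑ i, m i • b i‖ ^ 2))
      ≤ ∑' m : {m : Fin n → ℤ // ‖∑ i, m i • b i‖ < 1},
          Real.exp (-Real.pi * t * ‖∑ i, (m : Fin n → ℤ) i • b i‖ ^ 2) := by
  have ht0 : 0 < t := lt_of_le_of_lt (by positivity) ht
  rcases Nat.eq_zero_or_pos n with hn | hn
  · subst hn
    have hofull : ∀ m : Fin 0 → ℤ, ‖∑ i, m i • b i‖ < 1 := fun m => by simp
    have hRHS : (∑' m : {m : Fin 0 → ℤ // ‖∑ i, m i • b i‖ < 1},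
          Real.exp (-Real.pi * t * ‖∑ i, (m : Fin 0 → ℤ) i • b i‖ ^ 2))
        = ∑' m : Fin 0 → ℤ, Real.exp (-Real.pi * t * ‖∑ i, m i • b i‖ ^ 2) :=
      (Equiv.subtypeUnivEquiv hofull).tsum_eq
        (fun m : Fin 0 → ℤ => Real.exp (-Real.pi * t * ‖∑ i, m i • b i‖ ^ 2))
    rw [hRHS]
    norm_num
  obtain ⟨p, hnorm, hpsub, C, hCpos, hcoord⟩ :
      ∃ p : (Fin n → ℤ) → EuclideanSpace ℝ (Fin n),
        (∀ m : Fin n → ℤ, ‖∑ i, m i • b i‖ = ‖p m‖) ∧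
        (∀ x y : Fin n → ℤ, p (x - y) = p x - p y) ∧
        ∃ C : ℝ, 0 < C ∧ ∀ (m : Fin n → ℤ) (i : Fin n), |((m i : ℝ))| ≤ C * ‖p m‖ := by
    have hfd : FiniteDimensional ℝ V := Module.Basis.finiteDimensional_of_finite b
    have hdim : Module.finrank ℝ V = n := by
      rw [Module.finrank_eq_card_basis b, Fintype.card_fin]
    set ψ : V ≃ₗᵢ[ℝ] EuclideanSpace ℝ (Fin n) :=
      (stdOrthonormalBasis ℝ V).repr.trans
        (LinearIsometryEquiv.piLpCongrLeft 2 ℝ ℝ (finCongr hdim)) with hψ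
    refine ⟨fun m => ψ (∑ i, m i • b i), fun m => (ψ.norm_map _).symm, ?_, ?_⟩
    · intro x y
      simp only
      rw [← LinearIsometryEquiv.map_sub]
      congr 1
      rw [← Finset.sum_sub_distrib]
      exact Finset.sum_congr rfl fun i _ => by rw [Pi.sub_apply, sub_smul]
    · set T : EuclideanSpace ℝ (Fin n) →ₗ[ℝ] (Fin n → ℝ) :=
        (b.equivFun.toLinearMap).comp (ψ.symm.toLinearEquiv.toLinearMap) with hT
      have hTcont : Continuous T := T.continuous_of_finiteDimensional
      set Tc : EuclideanSpace ℝ (Fin n) →L[ℝ] (Fin n → ℝ) := ⟨T, hTcont⟩ with hTc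
      refine ⟨‖Tc‖ + 1, by positivity, ?_⟩
      intro m i
      have hTp : T (ψ (∑ i, m i • b i)) = fun i => ((m i : ℝ)) := by
        show b.equivFun (ψ.symm (ψ (∑ i, m i • b i))) = _
        rw [LinearIsometryEquiv.symm_apply_apply]
        have hrepr : (∑ i, m i • b i) = b.equivFun.symm (fun i => ((m i : ℝ))) := by
          rw [Module.Basis.equivFun_symm_apply]
          exact Finset.sum_congr rfl fun i _ => (Int.cast_smul_eq_zsmul ℝ (m i) (b i)).symm
        rw [hrepr, LinearEquiv.apply_symm_apply]
      have h1 : |((m i : ℝ))| ≤ ‖T (ψ (∑ i, m i • b i))‖ := by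
        rw [hTp]
        simpa using norm_le_pi_norm (fun i => ((m i : ℝ))) i
      have h2 : ‖T (ψ (∑ i, m i • b i))‖ ≤ ‖Tc‖ * ‖ψ (∑ i, m i • b i)‖ := Tc.le_opNorm _
      have h3 : ‖Tc‖ * ‖ψ (∑ i, m i • b i)‖ ≤ (‖Tc‖ + 1) * ‖ψ (∑ i, m i • b i)‖ :=
        mul_le_mul_of_nonneg_right (by linarith) (norm_nonneg _)
      linarith
  have hSg : ∀ s : ℝ, 0 < s → Summable (fun m : Fin n → ℤ => rexp (-s * ‖p m‖ ^ 2)) := by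
    intro s hs
    have hn' : (0:ℝ) < n := by exact_mod_cast hn
    have hβ : 0 < s / (n * C ^ 2) := by positivity
    refine Summable.of_nonneg_of_le (fun m => (exp_pos _).le) (fun m => ?_)
      (summable_box (fun k => (exp_pos _).le) (summable_exp_neg_int_sq hβ))
    rw [← Real.exp_sum]
    apply exp_le_exp.2
    have hsum_sq : ∑ i, ((m i : ℝ)) ^ 2 ≤ (n : ℝ) * (C ^ 2 * ‖p m‖ ^ 2) := by
      calc ∑ i, ((m i : ℝ)) ^ 2 ≤ ∑ _i : Fin n, C ^ 2 * ‖p m‖ ^ 2 := by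
            refine Finset.sum_le_sum fun i _ => ?_
            have := hcoord m i
            nlinarith [abs_nonneg ((m i : ℝ)), sq_abs ((m i : ℝ)), norm_nonneg (p m)]
        _ = (n : ℝ) * (C ^ 2 * ‖p m‖ ^ 2) := by
            rw [Finset.sum_const, Finset.card_univ, Fintype.card_fin, nsmul_eq_mul]
    have hrw : ∑ i, -(s / ((n : ℝ) * C ^ 2)) * ((m i : ℝ)) ^ 2
        = -(s / ((n : ℝ) * C ^ 2)) * ∑ i, ((m i : ℝ)) ^ 2 := by
      rw [Finset.mul_sum]
    rw [hrw]
    have h4 : (s / ((n:ℝ) * C ^ 2)) * (∑ i, ((m i : ℝ)) ^ 2)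
        ≤ (s / ((n:ℝ) * C ^ 2)) * ((n : ℝ) * (C ^ 2 * ‖p m‖ ^ 2)) :=
      mul_le_mul_of_nonneg_left hsum_sq (le_of_lt hβ)
    have h5 : (s / ((n:ℝ) * C ^ 2)) * ((n : ℝ) * (C ^ 2 * ‖p m‖ ^ 2)) = s * ‖p m‖ ^ 2 := by
      field_simp
    linarith
  have S0 : Summable (fun m : Fin n → ℤ => rexp (-(π * t) * ‖p m‖ ^ 2)) :=
    hSg _ (by positivity)
  have ylem : ∀ y : ℝ, 0 ≤ y → ∀ s : ℝ, 0 < s → y * rexp (-s * y) ≤ 1 / s := by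
    intro y hy s hs
    have h1 : s * y ≤ rexp (s * y) := by nlinarith [Real.add_one_le_exp (s * y)]
    have he : rexp (-s * y) = (rexp (s * y))⁻¹ := by rw [← Real.exp_neg]; ring_nf
    rw [he, ← div_eq_mul_inv, div_le_div_iff₀ (exp_pos _) hs]
    nlinarith
  have S2 : Summable (fun m : Fin n → ℤ => ‖p m‖ ^ 2 * rexp (-(π * t) * ‖p m‖ ^ 2)) := by
    have hhalf : 0 < π * t / 2 := by positivity
    refine Summable.of_nonneg_of_le
      (fun m => mul_nonneg (sq_nonneg _) (exp_pos _).le) (fun m => ?_)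
      ((hSg (π * t / 2) hhalf).mul_left (1 / (π * t / 2)))
    have hsplit : rexp (-(π * t) * ‖p m‖ ^ 2)
        = rexp (-(π * t / 2) * ‖p m‖ ^ 2) * rexp (-(π * t / 2) * ‖p m‖ ^ 2) := by
      rw [← Real.exp_add]; ring_nf
    rw [hsplit, ← mul_assoc]
    exact mul_le_mul_of_nonneg_right
      (ylem (‖p m‖ ^ 2) (sq_nonneg _) (π * t / 2) hhalf) (exp_pos _).le
  have hmom : (∑' m, ‖p m‖ ^ 2 * rexp (-(π * t) * ‖p m‖ ^ 2))
      ≤ ((n : ℝ) / (2 * π * t)) * ∑' m, rexp (-(π * t) * ‖p m‖ ^ 2) := by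
    set h : (Fin n → ℤ) → ℝ :=
      fun m => ((n : ℝ) / (2 * π * t) - ‖p m‖ ^ 2) * rexp (-(π * t) * ‖p m‖ ^ 2) with hh
    have hpsd : ∀ s : Finset (Fin n → ℤ), 0 ≤ ∑ x ∈ s, ∑ y ∈ s, h (x - y) := by
      intro s
      refine le_of_le_of_eq (psd ht0 s p) ?_
      refine Finset.sum_congr rfl fun x _ => Finset.sum_congr rfl fun y _ => ?_
      rw [hh]
      simp only
      rw [hpsub]
    have hsumabs : Summable fun m => |h m| := by
      refine Summable.of_nonneg_of_le (fun m => abs_nonneg _) (fun m => ?_)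
        ((S0.mul_left ((n : ℝ) / (2 * π * t))).add S2)
      rw [hh]
      simp only [abs_mul, Pi.add_apply]
      rw [abs_of_nonneg (exp_pos (-(π * t) * ‖p m‖ ^ 2)).le]
      have h1 : |((n : ℝ) / (2 * π * t) - ‖p m‖ ^ 2)| ≤ (n : ℝ) / (2 * π * t) + ‖p m‖ ^ 2 := by
        have h2 := abs_add_le ((n : ℝ) / (2 * π * t)) (-(‖p m‖ ^ 2))
        rw [abs_neg, ← sub_eq_add_neg] at h2
        calc |((n : ℝ) / (2 * π * t) - ‖p m‖ ^ 2)|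
            ≤ |((n : ℝ) / (2 * π * t))| + |‖p m‖ ^ 2| := h2
          _ = (n : ℝ) / (2 * π * t) + ‖p m‖ ^ 2 := by
              rw [abs_of_nonneg (by positivity), abs_of_nonneg (sq_nonneg _)]
      nlinarith [exp_pos (-(π * t) * ‖p m‖ ^ 2)]
    have h0 := tsum_nonneg_of_psd h hpsd hsumabs
    have hsplit2 : ∑' m, h m
        = ((n : ℝ) / (2 * π * t)) * (∑' m, rexp (-(π * t) * ‖p m‖ ^ 2))
          - ∑' m, ‖p m‖ ^ 2 * rexp (-(π * t) * ‖p m‖ ^ 2) := by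
      rw [← tsum_mul_left, ← Summable.tsum_sub (S0.mul_left _) S2]
      exact tsum_congr fun m => by rw [hh]; ring
    rw [hsplit2] at h0
    linarith
  set g : (Fin n → ℤ) → ℝ :=
    fun m => Real.exp (-Real.pi * t * ‖∑ i, m i • b i‖ ^ 2) with hg
  have hgrepr : ∀ m, g m = rexp (-(π * t) * ‖p m‖ ^ 2) := by
    intro m
    rw [hg]
    simp only
    rw [hnorm m]
    congr 1
    ring
  have hg0 : ∀ m, 0 ≤ g m := fun m => by rw [hgrepr]; exact (exp_pos _).le
  have hgs : Summable g := S0.congr fun m => (hgrepr m).symm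
  have S2g : Summable fun m => ‖p m‖ ^ 2 * g m :=
    S2.congr fun m => by rw [hgrepr m]
  set A : Set (Fin n → ℤ) := {m | ‖∑ i, m i • b i‖ < 1} with hA
  have hsplitA := Summable.tsum_add_tsum_compl (f := g) (s := A) (hgs.subtype _) (hgs.subtype _)
  have htail : ∑' (m : ↥Aᶜ), g ↑m ≤ ((n : ℝ) / (2 * π * t)) * ∑' m, g m := by
    have step1 : ∑' (m : ↥Aᶜ), g ↑m ≤ ∑' (m : ↥Aᶜ), ‖p ↑m‖ ^ 2 * g ↑m := by
      refine Summable.tsum_le_tsum (fun m => ?_) (hgs.subtype _) (S2g.subtype _)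
      have hm : ¬((↑m : Fin n → ℤ) ∈ A) := m.2
      have hm' : ¬(‖∑ i, (↑m : Fin n → ℤ) i • b i‖ < 1) := hm
      have h1 : 1 ≤ ‖p ↑m‖ := by rw [← hnorm]; linarith [not_lt.1 hm']
      nlinarith [mul_nonneg (mul_nonneg (sub_nonneg.2 h1)
        (by linarith : (0:ℝ) ≤ ‖p (↑m : Fin n → ℤ)‖ + 1)) (hg0 ↑m)]
    have step2 : ∑' (m : ↥Aᶜ), ‖p ↑m‖ ^ 2 * g ↑m ≤ ∑' m, ‖p m‖ ^ 2 * g m :=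
      Summable.tsum_le_tsum_of_inj Subtype.val Subtype.coe_injective
        (fun c _ => mul_nonneg (sq_nonneg _) (hg0 c)) (fun a => le_rfl)
        (S2g.subtype _) S2g
    have step3 : ∑' m, ‖p m‖ ^ 2 * g m ≤ ((n : ℝ) / (2 * π * t)) * ∑' m, g m := by
      calc ∑' m, ‖p m‖ ^ 2 * g m
          = ∑' m, ‖p m‖ ^ 2 * rexp (-(π * t) * ‖p m‖ ^ 2) :=
            tsum_congr fun m => by rw [hgrepr m]
        _ ≤ ((n : ℝ) / (2 * π * t)) * ∑' m, rexp (-(π * t) * ‖p m‖ ^ 2) := hmom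
        _ = ((n : ℝ) / (2 * π * t)) * ∑' m, g m := by
            rw [tsum_congr fun m => (hgrepr m).symm]
    exact step1.trans (step2.trans step3)
  have hform : (∑' m : {m : Fin n → ℤ // ‖∑ i, m i • b i‖ < 1},
        Real.exp (-Real.pi * t * ‖∑ i, (m : Fin n → ℤ) i • b i‖ ^ 2))
      = ∑' (x : ↥A), g ↑x := rfl
  rw [hform]
  have hexp : (1 - (n : ℝ) / (2 * π * t)) * (∑' m, g m)
      = ∑' m, g m - ((n : ℝ) / (2 * π * t)) * ∑' m, g m := by ring
  rw [hexp]
  linarith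
end

section
/- Let L be a full-rank lattice of rank n in a Euclidean space admitting an orthogonal Z-basis e₁ ≤ … ≤ e_n (ordered by norm), so that the i-th successive minimum satisfies λ_i(L) = ‖e_i‖. Then 0 ≤ h⁰_θ(L) + ∑_{i=1}^n log min(λ_i(L), 1) ≤ n log(3/2), where h⁰_θ(L) = log ∑_{v∈L} e^{−π‖v‖²}. -/
open Real Finset

noncomputable def thetaZ (a : ℝ) : ℝ := ∑' k : ℤ, rexp (-π * a * (k : ℝ) ^ 2)

lemma natAbs_le_sq (k : ℤ) : (k.natAbs : ℝ) ≤ (k : ℝ) ^ 2 := by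
  have h1 : k.natAbs ≤ k.natAbs ^ 2 := Nat.le_self_pow two_ne_zero _
  have h2 : ((k.natAbs : ℝ)) ^ 2 = (k : ℝ) ^ 2 := by
    rw [Nat.cast_natAbs, Int.cast_abs, sq_abs]
  calc (k.natAbs : ℝ) ≤ ((k.natAbs : ℝ)) ^ 2 := by exact_mod_cast h1
    _ = (k : ℝ) ^ 2 := h2

lemma term_le_geom {a : ℝ} (ha : 1 ≤ a) (k : ℤ) :
    rexp (-π * a * (k : ℝ) ^ 2) ≤ rexp (-π) ^ k.natAbs := by
  rw [← Real.exp_nat_mul]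
  apply Real.exp_le_exp.mpr
  have h := natAbs_le_sq k
  have h2 : π * (k.natAbs : ℝ) ≤ π * (k : ℝ) ^ 2 := mul_le_mul_of_nonneg_left h pi_pos.le
  have h3 : (0:ℝ) ≤ (a - 1) * (π * (k : ℝ) ^ 2) :=
    mul_nonneg (by linarith) (by positivity)
  nlinarith

lemma summable_geomAbs {r : ℝ} (h0 : 0 ≤ r) (h1 : r < 1) :
    Summable fun k : ℤ => r ^ k.natAbs := by
  apply Summable.of_nat_of_neg
  · simpa using summable_geometric_of_lt_one h0 h1
  · simpa using summable_geometric_of_lt_one h0 h1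

lemma summable_thetaZ {a : ℝ} (ha : 0 < a) :
    Summable fun k : ℤ => rexp (-π * a * (k : ℝ) ^ 2) := by
  have hr : rexp (-π * a) < 1 := exp_lt_one_iff.mpr (by nlinarith [pi_pos])
  apply Summable.of_nonneg_of_le (fun k => (exp_pos _).le) (fun k => ?_)
    (summable_geomAbs (exp_pos _).le hr)
  rw [← Real.exp_nat_mul]
  apply Real.exp_le_exp.mpr
  have h := natAbs_le_sq k
  have h2 : (π * a) * (k.natAbs : ℝ) ≤ (π * a) * (k : ℝ) ^ 2 :=
    mul_le_mul_of_nonneg_left h (by positivity)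
  nlinarith

lemma one_le_thetaZ {a : ℝ} (ha : 0 < a) : 1 ≤ thetaZ a := by
  have h := Summable.le_tsum (summable_thetaZ ha) 0 (fun j _ => (exp_pos _).le)
  unfold thetaZ
  simpa using h

lemma thetaZ_pos {a : ℝ} (ha : 0 < a) : 0 < thetaZ a :=
  lt_of_lt_of_le one_pos (one_le_thetaZ ha)

lemma exp_pi_ge_five : (5 : ℝ) ≤ rexp π := by
  have h1 := add_one_le_exp (π / 2)
  have h2 : rexp π = rexp (π / 2) * rexp (π / 2) := by
    rw [← Real.exp_add]; ring_nf
  have h3 : (π/2 + 1) * (π/2 + 1) ≤ rexp (π/2) * rexp (π/2) :=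
    mul_le_mul h1 h1 (by positivity) (exp_pos _).le
  nlinarith [pi_gt_three]

lemma tsum_geomAbs {r : ℝ} (h0 : 0 ≤ r) (h1 : r < 1) :
    (∑' k : ℤ, r ^ k.natAbs) = (1 - r)⁻¹ + r * (1 - r)⁻¹ := by
  have hsumnat : Summable fun n : ℕ => r ^ ((n : ℤ)).natAbs := by
    simpa using summable_geometric_of_lt_one h0 h1
  have hkey : (fun n : ℕ => r ^ ((-((n : ℤ) + 1))).natAbs) = fun n : ℕ => r * r ^ n := by
    funext n
    have : ((-((n : ℤ) + 1))).natAbs = n + 1 := by omega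
    rw [this, pow_succ]; ring
  have hsumneg : Summable fun n : ℕ => r ^ ((-((n : ℤ) + 1))).natAbs := by
    rw [hkey]
    exact (summable_geometric_of_lt_one h0 h1).mul_left r
  rw [tsum_of_nat_of_neg_add_one (f := fun k : ℤ => r ^ k.natAbs) hsumnat hsumneg]
  congr 1
  · rw [← tsum_geometric_of_lt_one h0 h1]
    apply tsum_congr; intro n; simp
  · rw [hkey, tsum_mul_left, tsum_geometric_of_lt_one h0 h1]

lemma thetaZ_le {a : ℝ} (ha : 1 ≤ a) : thetaZ a ≤ 3 / 2 := by
  have ha0 : (0:ℝ) < a := lt_of_lt_of_le one_pos ha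
  have hr0 : (0:ℝ) < rexp (-π) := exp_pos _
  have hr5 : rexp (-π) ≤ 1 / 5 := by
    rw [exp_neg]
    have := exp_pi_ge_five
    rw [show (1:ℝ)/5 = (5:ℝ)⁻¹ by norm_num]
    exact inv_anti₀ (by norm_num) this
  have hr1 : rexp (-π) < 1 := lt_of_le_of_lt hr5 (by norm_num)
  have hsum : thetaZ a ≤ ∑' k : ℤ, rexp (-π) ^ k.natAbs := by
    unfold thetaZ
    exact Summable.tsum_le_tsum (term_le_geom ha) (summable_thetaZ ha0) (summable_geomAbs hr0.le hr1)
  rw [tsum_geomAbs hr0.le hr1] at hsum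
  have h1r : (0:ℝ) < 1 - rexp (-π) := by linarith
  refine hsum.trans ?_
  have heq2 : (1 - rexp (-π))⁻¹ + rexp (-π) * (1 - rexp (-π))⁻¹
      = (1 + rexp (-π)) / (1 - rexp (-π)) := by field_simp
  rw [heq2, div_le_div_iff₀ h1r (by norm_num : (0:ℝ) < 2)]
  linarith

lemma thetaZ_funeq {a : ℝ} (ha : 0 < a) :
    thetaZ a = (Real.sqrt a)⁻¹ * thetaZ a⁻¹ := by
  have h := Real.tsum_exp_neg_mul_int_sq ha
  unfold thetaZ
  rw [h, Real.sqrt_eq_rpow, one_div]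
  congr 1

lemma min_theta_bounds {t : ℝ} (ht : 0 < t) :
    1 ≤ min t 1 * thetaZ (t ^ 2) ∧ min t 1 * thetaZ (t ^ 2) ≤ 3 / 2 := by
  rcases le_or_gt 1 t with h | h
  · rw [min_eq_right h]
    have h2 : 1 ≤ t ^ 2 := by nlinarith
    rw [one_mul]
    exact ⟨one_le_thetaZ (by positivity), thetaZ_le h2⟩
  · rw [min_eq_left h.le]
    have ht2 : (0:ℝ) < t ^ 2 := by positivity
    have hfe := thetaZ_funeq ht2
    have hsq : Real.sqrt (t ^ 2) = t := Real.sqrt_sq ht.le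
    rw [hsq] at hfe
    have key : t * thetaZ (t ^ 2) = thetaZ (t ^ 2)⁻¹ := by
      rw [hfe]; field_simp
    have hinv : 1 ≤ (t ^ 2)⁻¹ := by
      rw [le_inv_comm₀ one_pos ht2, inv_one]
      nlinarith
    rw [key]
    exact ⟨one_le_thetaZ (by positivity), thetaZ_le hinv⟩

lemma pi_prod_lemma : ∀ (n : ℕ) (c : Fin n → ℝ), (∀ i, 0 < c i) →
    Summable (fun m : Fin n → ℤ => ∏ i, rexp (-π * c i * (m i : ℝ) ^ 2)) ∧
    (∑' m : Fin n → ℤ, ∏ i, rexp (-π * c i * (m i : ℝ) ^ 2)) = ∏ i, thetaZ (c i) := by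
  intro n
  induction n with
  | zero =>
    intro c hc
    have hf : (fun m : Fin 0 → ℤ => ∏ i, rexp (-π * c i * (m i : ℝ) ^ 2)) = fun _ => 1 := by
      funext m; simp
    have hs : HasSum (fun m : Fin 0 → ℤ => ∏ i, rexp (-π * c i * (m i : ℝ) ^ 2)) 1 := by
      rw [hf]
      have := hasSum_single (f := fun _ : Fin 0 → ℤ => (1:ℝ)) (default)
        (fun b' hb' => absurd (Subsingleton.elim b' default) hb')
      simpa using this
    exact ⟨hs.summable, by rw [hs.tsum_eq]; simp⟩
  | succ n ih =>
    intro c hc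
    obtain ⟨ihs, ihe⟩ := ih (fun i => c i.succ) (fun i => hc i.succ)
    set e : (ℤ × (Fin n → ℤ)) ≃ (Fin (n+1) → ℤ) := Fin.consEquiv (fun _ => ℤ) with he
    have hg : ∀ p : ℤ × (Fin n → ℤ),
        (∏ i, rexp (-π * c i * ((e p) i : ℝ) ^ 2)) =
        rexp (-π * c 0 * (p.1 : ℝ) ^ 2) * ∏ i : Fin n, rexp (-π * c i.succ * (p.2 i : ℝ) ^ 2) := by
      intro p
      rw [Fin.prod_univ_succ]
      simp [he, Fin.consEquiv]
    have hnorm1 : Summable fun k : ℤ => ‖rexp (-π * c 0 * (k : ℝ) ^ 2)‖ := by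
      refine (summable_thetaZ (hc 0)).congr fun k => ?_
      rw [Real.norm_of_nonneg (exp_pos _).le]
    have hnorm2 : Summable fun m : Fin n → ℤ => ‖∏ i, rexp (-π * c i.succ * (m i : ℝ) ^ 2)‖ := by
      refine ihs.congr fun m => ?_
      rw [Real.norm_of_nonneg (Finset.prod_nonneg fun i _ => (exp_pos _).le)]
    have hgsum : Summable fun p : ℤ × (Fin n → ℤ) =>
        rexp (-π * c 0 * (p.1 : ℝ) ^ 2) * ∏ i : Fin n, rexp (-π * c i.succ * (p.2 i : ℝ) ^ 2) :=
      summable_mul_of_summable_norm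
        (f := fun k : ℤ => rexp (-π * c 0 * (k : ℝ) ^ 2))
        (g := fun m : Fin n → ℤ => ∏ i : Fin n, rexp (-π * c i.succ * (m i : ℝ) ^ 2))
        hnorm1 hnorm2
    have hsummable : Summable (fun m : Fin (n+1) → ℤ => ∏ i, rexp (-π * c i * (m i : ℝ) ^ 2)) := by
      have : Summable ((fun m : Fin (n+1) → ℤ => ∏ i, rexp (-π * c i * (m i : ℝ) ^ 2)) ∘ e) :=
        hgsum.congr fun p => (hg p).symm
      exact e.summable_iff.mp this
    refine ⟨hsummable, ?_⟩
    rw [← e.tsum_eq]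
    have : (∑' p : ℤ × (Fin n → ℤ), ∏ i, rexp (-π * c i * ((e p) i : ℝ) ^ 2)) =
        ∑' p : ℤ × (Fin n → ℤ),
          rexp (-π * c 0 * (p.1 : ℝ) ^ 2) * ∏ i : Fin n, rexp (-π * c i.succ * (p.2 i : ℝ) ^ 2) :=
      tsum_congr hg
    rw [this, ← tsum_mul_tsum_of_summable_norm
      (f := fun k : ℤ => rexp (-π * c 0 * (k : ℝ) ^ 2))
      (g := fun m : Fin n → ℤ => ∏ i : Fin n, rexp (-π * c i.succ * (m i : ℝ) ^ 2))
      hnorm1 hnorm2, ihe, Fin.prod_univ_succ]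
    rfl

theorem theta_invariant_orthogonal_successive_minima
    {V : Type*} [NormedAddCommGroup V] [InnerProductSpace ℝ V]
    {n : ℕ} (b : Module.Basis (Fin n) ℝ V)
    (hortho : ∀ i j, i ≠ j → (inner ℝ (b i) (b j) : ℝ) = 0)
    (hmono : Monotone fun i : Fin n => ‖b i‖) :
    0 ≤ Real.log (∑' m : Fin n → ℤ, Real.exp (-Real.pi * ‖∑ i, m i • b i‖ ^ 2))
        + ∑ i, Real.log (min ‖b i‖ 1) ∧
    Real.log (∑' m : Fin n → ℤ, Real.exp (-Real.pi * ‖∑ i, m i • b i‖ ^ 2))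
        + ∑ i, Real.log (min ‖b i‖ 1) ≤ n * Real.log (3 / 2) := by
  have hbne : ∀ i, (0:ℝ) < ‖b i‖ := fun i => norm_pos_iff.mpr (b.ne_zero i)
  set c : Fin n → ℝ := fun i => ‖b i‖ ^ 2 with hcdef
  have hc : ∀ i, 0 < c i := fun i => pow_pos (hbne i) 2
  -- norm identity
  have hnorm : ∀ m : Fin n → ℤ, ‖∑ i, m i • b i‖ ^ 2 = ∑ i, (m i : ℝ) ^ 2 * ‖b i‖ ^ 2 := by
    intro m
    have hsmul : ∀ i, (m i • b i) = (m i : ℝ) • b i := fun i =>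
      (Int.cast_smul_eq_zsmul ℝ (m i) (b i)).symm
    simp_rw [hsmul]
    rw [← real_inner_self_eq_norm_sq, sum_inner]
    refine Finset.sum_congr rfl fun i _ => ?_
    rw [inner_sum, Finset.sum_eq_single i]
    · rw [real_inner_smul_left, real_inner_smul_right, real_inner_self_eq_norm_sq]; ring
    · intro j _ hj
      rw [real_inner_smul_left, real_inner_smul_right, hortho i j (Ne.symm hj)]; ring
    · intro h; exact absurd (mem_univ i) h
  have hterm : ∀ m : Fin n → ℤ,
      rexp (-π * ‖∑ i, m i • b i‖ ^ 2) = ∏ i, rexp (-π * c i * (m i : ℝ) ^ 2) := by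
    intro m
    rw [hnorm m, Finset.mul_sum, Real.exp_sum]
    apply Finset.prod_congr rfl; intro i _
    congr 1; rw [hcdef]; ring
  obtain ⟨hsummable, heq⟩ := pi_prod_lemma n c hc
  have htsum : (∑' m : Fin n → ℤ, rexp (-π * ‖∑ i, m i • b i‖ ^ 2)) = ∏ i, thetaZ (c i) := by
    rw [← heq]; exact tsum_congr hterm
  have hlog : Real.log (∑' m : Fin n → ℤ, rexp (-π * ‖∑ i, m i • b i‖ ^ 2))
      = ∑ i, Real.log (thetaZ (c i)) := by
    rw [htsum]
    exact Real.log_prod fun i _ => (thetaZ_pos (hc i)).ne'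
  rw [hlog, ← Finset.sum_add_distrib]
  have hpt : ∀ i, Real.log (thetaZ (c i)) + Real.log (min ‖b i‖ 1)
      = Real.log (min ‖b i‖ 1 * thetaZ (c i)) := by
    intro i
    rw [← Real.log_mul (thetaZ_pos (hc i)).ne' (lt_min (hbne i) one_pos).ne', mul_comm]
  have hbdd : ∀ i, 0 ≤ Real.log (min ‖b i‖ 1 * thetaZ (c i)) ∧
      Real.log (min ‖b i‖ 1 * thetaZ (c i)) ≤ Real.log (3/2) := by
    intro i
    obtain ⟨h1, h2⟩ := min_theta_bounds (hbne i)
    exact ⟨Real.log_nonneg h1, Real.log_le_log (by linarith) h2⟩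
  constructor
  · apply Finset.sum_nonneg
    intro i _
    rw [hpt i]
    exact (hbdd i).1
  · calc ∑ i, (Real.log (thetaZ (c i)) + Real.log (min ‖b i‖ 1))
        ≤ ∑ _i : Fin n, Real.log (3/2) := by
          apply Finset.sum_le_sum
          intro i _
          rw [hpt i]
          exact (hbdd i).2
      _ = n * Real.log (3/2) := by rw [Finset.sum_const, card_univ]; simp [nsmul_eq_mul]
end

section
/- Let L be a full-rank lattice of rank n in a Euclidean space with an orthogonal Z-basis. Then −(n/2) log n + log(1 − 1/(2π)) ≤ ĥ⁰(L) + ∑_{i=1}^n log min(λ_i(L), 1) ≤ π + n log(3/2), where ĥ⁰(L) = log #{v ∈ L : ‖v‖ ≤ 1} and λ_i(L) are the successive minima. -/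
/-- The `i`-th successive minimum (for `1 ≤ i ≤ n`) of the lattice spanned over `ℤ`
by the basis `b`. -/
noncomputable def succMin {V : Type*} [NormedAddCommGroup V] [InnerProductSpace ℝ V]
    {n : ℕ} (b : Module.Basis (Fin n) ℝ V) (i : ℕ) : ℝ :=
  sInf {r : ℝ | 0 < r ∧ i ≤ Module.finrank ℝ (Submodule.span ℝ
    {x : V | (∃ m : Fin n → ℤ, x = ∑ j, m j • b j) ∧ ‖x‖ ≤ r})}

open Real Finset

lemma pow_le_exp (x : ℝ) (hx : 0 ≤ x) : (1 + x / 128) ^ (128:ℕ) ≤ Real.exp x := by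
  have h1 : (1 + x/128) ≤ Real.exp (x/128) := by
    have := Real.add_one_le_exp (x/128); linarith
  have h2 : (1 + x/128) ^ (128:ℕ) ≤ (Real.exp (x/128)) ^ (128:ℕ) := by
    apply pow_le_pow_left₀ (by positivity) h1
  calc (1 + x/128) ^ (128:ℕ) ≤ (Real.exp (x/128)) ^ (128:ℕ) := h2
    _ = Real.exp (128 * (x/128)) := (Real.exp_nat_mul _ 128).symm
    _ = Real.exp x := by ring_nf

lemma exp_quarter_pi : (50:ℝ)/23 ≤ Real.exp (π/4) := by
  have hπ : (3.141592:ℝ) ≤ π := Real.pi_gt_d6.le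
  have h0 : (0:ℝ) ≤ π/4 := by positivity
  have h1 : ((1 + (3.141592:ℝ)/4/128) ^ (128:ℕ)) ≤ Real.exp (π/4) := by
    refine le_trans (pow_le_pow_left₀ (by norm_num) ?_ 128) (pow_le_exp _ h0)
    linarith
  refine le_trans ?_ h1
  norm_num

lemma exp_049_pi : (50:ℝ)/11 ≤ Real.exp (0.49 * π) := by
  have hπ : (3.141592:ℝ) ≤ π := Real.pi_gt_d6.le
  have h0 : (0:ℝ) ≤ 0.49 * π := by positivity
  have h1 : ((1 + (0.49 * 3.141592:ℝ)/128) ^ (128:ℕ)) ≤ Real.exp (0.49 * π) := by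
    refine le_trans (pow_le_pow_left₀ (by norm_num) ?_ 128) (pow_le_exp _ h0)
    nlinarith
  refine le_trans ?_ h1
  norm_num

lemma geom_le_inv {q : ℝ} (h0 : 0 ≤ q) (h1 : q < 1) (K : ℕ) :
    ∑ i ∈ Finset.range K, q ^ i ≤ (1 - q)⁻¹ := by
  have hq : 0 < 1 - q := by linarith
  rw [inv_eq_one_div, le_div_iff₀ hq]
  have h := geom_sum_mul q K
  have hqK : 0 ≤ q ^ K := pow_nonneg h0 K
  nlinarith [h]

lemma sum_exp_le_geom {a : ℝ} (ha : 0 < a) (K : ℕ) :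
    ∑ i ∈ Finset.range K, Real.exp (-(π * a^2) * ((i:ℝ)+1)^2)
      ≤ Real.exp (-(π * a^2)) / (1 - (Real.exp (-(π * a^2)))^3) := by
  set c : ℝ := π * a^2 with hc
  have hcpos : 0 < c := by positivity
  set t : ℝ := Real.exp (-c) with ht
  have ht0 : 0 < t := Real.exp_pos _
  have ht1 : t < 1 := by
    rw [ht, Real.exp_lt_one_iff]; linarith
  have hterm : ∀ i ∈ Finset.range K, Real.exp (-c * ((i:ℝ)+1)^2) ≤ t * (t^3)^i := by
    intro i _
    have h1 : t * (t^3)^i = Real.exp (-c + (i:ℝ) * (3 * (-c))) := by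
      rw [Real.exp_add, ht]
      congr 1
      rw [← Real.exp_nat_mul, ← Real.exp_nat_mul]
      push_cast; ring_nf
    rw [h1, Real.exp_le_exp]
    have : (1 + 3*(i:ℝ)) ≤ ((i:ℝ)+1)^2 := by
      rcases Nat.eq_zero_or_pos i with h | h
      · subst h; norm_num
      · have h1 : (1:ℝ) ≤ i := by exact_mod_cast h
        nlinarith
    nlinarith [hcpos]
  calc ∑ i ∈ Finset.range K, Real.exp (-c * ((i:ℝ)+1)^2)
      ≤ ∑ i ∈ Finset.range K, t * (t^3)^i := Finset.sum_le_sum hterm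
    _ = t * ∑ i ∈ Finset.range K, (t^3)^i := by rw [Finset.mul_sum]
    _ ≤ t * (1 - t^3)⁻¹ := by
        apply mul_le_mul_of_nonneg_left _ ht0.le
        exact geom_le_inv (by positivity) (pow_lt_one₀ ht0.le ht1 (by norm_num)) K
    _ = t / (1 - t^3) := by rw [div_eq_mul_inv]

lemma sum_exp_le_integral {a : ℝ} (ha : 0 < a) (K : ℕ) :
    ∑ i ∈ Finset.range K, Real.exp (-(π * a^2) * ((i:ℝ)+1)^2) ≤ 1 / (2*a) := by
  set c : ℝ := π * a^2 with hc
  have hcpos : 0 < c := by positivity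
  set f : ℝ → ℝ := fun x => Real.exp (-c * x^2) with hf
  have hanti : AntitoneOn f (Set.Icc (0:ℝ) (0 + K)) := by
    intro x hx y hy hxy
    simp only [hf]
    rw [Real.exp_le_exp]
    have hx0 : 0 ≤ x := hx.1
    nlinarith [sq_nonneg x, sq_nonneg y, mul_le_mul hxy hxy hx0 (hx0.trans hxy)]
  have h1 : ∑ i ∈ Finset.range K, f (0 + (i + 1 : ℕ)) ≤ ∫ x in (0:ℝ)..(0 + K), f x :=
    hanti.sum_le_integral
  have h2 : ∑ i ∈ Finset.range K, Real.exp (-(π * a^2) * ((i:ℝ)+1)^2)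
      = ∑ i ∈ Finset.range K, f (0 + (i + 1 : ℕ)) := by
    apply Finset.sum_congr rfl
    intro i _
    simp only [hf, hc]
    push_cast
    ring_nf
  have hint : MeasureTheory.Integrable f := integrable_exp_neg_mul_sq hcpos
  have h3 : ∫ x in (0:ℝ)..(0 + K), f x ≤ ∫ x in Set.Ioi (0:ℝ), f x := by
    rw [zero_add, intervalIntegral.integral_of_le (by positivity : (0:ℝ) ≤ K)]
    apply MeasureTheory.setIntegral_mono_set hint.integrableOn
    · filter_upwards with x using Real.exp_nonneg _
    · exact (Set.Ioc_subset_Ioi_self).eventuallyLE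
  have h4 : ∫ x in Set.Ioi (0:ℝ), f x = 1 / (2*a) := by
    rw [hf]
    rw [integral_gaussian_Ioi c]
    rw [hc]
    rw [show π / (π * a^2) = (a^2)⁻¹ by field_simp]
    rw [Real.sqrt_inv, Real.sqrt_sq ha.le]
    field_simp
  rw [h2]
  calc _ ≤ ∫ x in (0:ℝ)..(0 + K), f x := h1
    _ ≤ ∫ x in Set.Ioi (0:ℝ), f x := h3
    _ = 1/(2*a) := h4

noncomputable def thetaF (c : ℝ) (K : ℕ) : ℝ :=
  1 + 2 * ∑ i ∈ Finset.range K, Real.exp (-(π * c^2) * ((i:ℝ)+1)^2)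

lemma theta_factor {a : ℝ} (ha : 0 < a) (K : ℕ) :
    (1 + 2 * ∑ i ∈ Finset.range K, Real.exp (-(π * a^2) * ((i:ℝ)+1)^2)) * min a 1 ≤ 3/2 := by
  set S : ℝ := ∑ i ∈ Finset.range K, Real.exp (-(π * a^2) * ((i:ℝ)+1)^2) with hS
  have hS0 : 0 ≤ S := Finset.sum_nonneg fun i _ => (Real.exp_nonneg _)
  rcases le_or_gt a (1/2) with hhalf | hhalf
  · -- small a: integral bound
    have h1 : S ≤ 1/(2*a) := sum_exp_le_integral ha K
    have hmin : min a 1 = a := min_eq_left (by linarith)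
    rw [hmin]
    have h2 : S * a ≤ 1/2 := by
      have := mul_le_mul_of_nonneg_right h1 ha.le
      calc S * a ≤ 1/(2*a) * a := this
        _ = 1/2 := by field_simp
    nlinarith
  · -- a ≥ 1/2 : geometric bound
    set t : ℝ := Real.exp (-(π * a^2)) with ht
    have ht0 : 0 < t := Real.exp_pos _
    have ht1 : t < 1 := by
      rw [ht, Real.exp_lt_one_iff]
      have : 0 < π * a^2 := by positivity
      linarith
    have hgeom : S ≤ t / (1 - t^3) := sum_exp_le_geom ha K
    have hmono : ∀ u : ℝ, 0 < u → u < 1 → t ≤ u → t / (1-t^3) ≤ u / (1-u^3) := by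
      intro u hu0 hu1 htu
      have h3 : t^3 ≤ u^3 := pow_le_pow_left₀ ht0.le htu 3
      have h4 : 0 < 1 - u^3 := by nlinarith [pow_lt_one₀ hu0.le hu1 (three_ne_zero)]
      exact div_le_div₀ hu0.le htu h4 (by linarith)
    rcases le_or_gt a (7/10) with h7 | h7
    · -- 1/2 < a ≤ 0.7 : t ≤ exp (-π/4) ≤ 0.46
      have hta : t ≤ 23/50 := by
        have e1 : t ≤ Real.exp (-(π/4)) := by
          rw [ht, Real.exp_le_exp]
          nlinarith [Real.pi_pos, sq_nonneg (a - 1/2)]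
        have e2 : Real.exp (-(π/4)) ≤ 23/50 := by
          rw [Real.exp_neg]
          rw [inv_le_comm₀ (Real.exp_pos _) (by norm_num)]
          calc (23/50:ℝ)⁻¹ = 50/23 := by norm_num
            _ ≤ Real.exp (π/4) := exp_quarter_pi
        linarith
      have hSb : S ≤ (23/50 : ℝ) / (1 - (23/50:ℝ)^3) :=
        le_trans hgeom (hmono _ (by norm_num) (by norm_num) hta)
      have hmin : min a 1 = a := min_eq_left (by linarith)
      rw [hmin]
      have hq : (23/50 : ℝ) / (1 - (23/50:ℝ)^3) ≤ 0.51 := by norm_num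
      nlinarith
    · -- a > 0.7 : t ≤ exp (-0.49 π) ≤ 0.22
      have hta : t ≤ 11/50 := by
        have e1 : t ≤ Real.exp (-(0.49 * π)) := by
          rw [ht, Real.exp_le_exp]
          nlinarith [Real.pi_pos, sq_nonneg (a - 7/10)]
        have e2 : Real.exp (-(0.49 * π)) ≤ 11/50 := by
          rw [Real.exp_neg]
          rw [inv_le_comm₀ (Real.exp_pos _) (by norm_num)]
          calc (11/50:ℝ)⁻¹ = 50/11 := by norm_num
            _ ≤ Real.exp (0.49 * π) := exp_049_pi
        linarith
      have hSb : S ≤ (11/50 : ℝ) / (1 - (11/50:ℝ)^3) :=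
        le_trans hgeom (hmono _ (by norm_num) (by norm_num) hta)
      have hq : (11/50 : ℝ) / (1 - (11/50:ℝ)^3) ≤ 0.2224 := by norm_num
      have hmin : min a 1 ≤ 1 := min_le_right _ _
      have hmin0 : 0 ≤ min a 1 := le_min ha.le zero_le_one
      nlinarith

lemma thetaF_one_le (c : ℝ) (K : ℕ) : (1:ℝ) ≤ thetaF c K := by
  unfold thetaF
  have : (0:ℝ) ≤ ∑ i ∈ Finset.range K, Real.exp (-(π * c^2) * ((i:ℝ)+1)^2) :=
    Finset.sum_nonneg fun i _ => (Real.exp_nonneg _)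
  linarith

lemma thetaF_mul_min_le {a : ℝ} (ha : 0 < a) (K : ℕ) : thetaF a K * min a 1 ≤ 3/2 :=
  theta_factor ha K

lemma sum_Icc_sym (f : ℤ → ℝ) (hf : ∀ m, f (-m) = f m) (K : ℕ) :
    ∑ m ∈ Finset.Icc (-(K:ℤ)) K, f m = f 0 + 2 * ∑ i ∈ Finset.range K, f ((i:ℤ)+1) := by
  induction K with
  | zero => simp
  | succ K ih =>
    have hset : Finset.Icc (-(K+1:ℕ):ℤ) ((K+1:ℕ):ℤ)
        = insert (-(K+1:ℕ):ℤ) (insert ((K+1:ℕ):ℤ) (Finset.Icc (-(K:ℕ):ℤ) (K:ℤ))) := by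
      ext x
      simp only [Finset.mem_Icc, Finset.mem_insert]
      push_cast
      omega
    have h1 : ((K+1:ℕ):ℤ) ∉ Finset.Icc (-(K:ℕ):ℤ) (K:ℤ) := by
      simp only [Finset.mem_Icc]; push_cast; omega
    have h2 : (-(K+1:ℕ):ℤ) ∉ insert ((K+1:ℕ):ℤ) (Finset.Icc (-(K:ℕ):ℤ) (K:ℤ)) := by
      simp only [Finset.mem_Icc, Finset.mem_insert]; push_cast; omega
    rw [hset, Finset.sum_insert h2, Finset.sum_insert h1, ih, Finset.sum_range_succ,
      hf ((K+1:ℕ):ℤ)]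
    push_cast
    ring

lemma sum_Icc_eq_thetaF (c : ℝ) (K : ℤ) (hK : 0 ≤ K) :
    ∑ m ∈ Finset.Icc (-K) K, Real.exp (-(π * c^2) * (m:ℝ)^2) = thetaF c K.toNat := by
  have heq : Finset.Icc (-K) K
      = Finset.Icc (-((K.toNat : ℕ) : ℤ)) (((K.toNat : ℕ) : ℤ)) := by
    rw [Int.toNat_of_nonneg hK]
  rw [heq, sum_Icc_sym (fun m => Real.exp (-(π * c^2) * (m:ℝ)^2))
    (fun m => by push_cast; ring_nf) K.toNat]
  unfold thetaF
  congr 1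
  · norm_num
  · congr 1
    apply Finset.sum_congr rfl
    intro i _
    push_cast
    ring_nf

lemma norm_zsum_sq {V : Type*} [NormedAddCommGroup V] [InnerProductSpace ℝ V]
    {n : ℕ} (b : Fin n → V)
    (hortho : ∀ i j, i ≠ j → (inner ℝ (b i) (b j) : ℝ) = 0) (m : Fin n → ℤ) :
    ‖∑ i, m i • b i‖^2 = ∑ i, (m i : ℝ)^2 * ‖b i‖^2 := by
  have hx : ∑ i, m i • b i = ∑ i, ((m i : ℝ)) • b i := by
    apply Finset.sum_congr rfl
    intro i _
    exact (Int.cast_smul_eq_zsmul ℝ (m i) (b i)).symm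
  rw [hx, ← real_inner_self_eq_norm_sq]
  rw [sum_inner]
  apply Finset.sum_congr rfl
  intro i _
  rw [real_inner_smul_left, inner_sum]
  rw [Finset.sum_eq_single i]
  · rw [real_inner_smul_right, real_inner_self_eq_norm_sq]
    ring
  · intro j _ hj
    rw [real_inner_smul_right, hortho i j (Ne.symm hj)]
    ring
  · intro h
    exact absurd (Finset.mem_univ i) h

lemma finrank_span_ball {V : Type*} [NormedAddCommGroup V] [InnerProductSpace ℝ V]
    {n : ℕ} (b : Module.Basis (Fin n) ℝ V)
    (hortho : ∀ i j, i ≠ j → (inner ℝ (b i) (b j) : ℝ) = 0) (r : ℝ) :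
    Module.finrank ℝ (Submodule.span ℝ
      {x : V | (∃ m : Fin n → ℤ, x = ∑ j, m j • b j) ∧ ‖x‖ ≤ r})
      = Nat.card {j : Fin n // ‖b j‖ ≤ r} := by
  classical
  have hspan : Submodule.span ℝ {x : V | (∃ m : Fin n → ℤ, x = ∑ j, m j • b j) ∧ ‖x‖ ≤ r}
      = Submodule.span ℝ (Set.range (fun j : {j : Fin n // ‖b j‖ ≤ r} => b j)) := by
    apply le_antisymm
    · rw [Submodule.span_le]
      rintro x ⟨⟨m, rfl⟩, hxr⟩
      have hx : ∑ i, m i • b i = ∑ i, ((m i : ℝ)) • b i :=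
        Finset.sum_congr rfl fun i _ => (Int.cast_smul_eq_zsmul ℝ (m i) (b i)).symm
      rw [SetLike.mem_coe, hx]
      apply Submodule.sum_mem
      intro j _
      rcases eq_or_ne (m j) 0 with hmj | hmj
      · rw [hmj]; simp
      · apply Submodule.smul_mem
        apply Submodule.subset_span
        have hnorm := norm_zsum_sq b hortho m
        have hr0 : 0 ≤ r := le_trans (norm_nonneg _) hxr
        have h1 : (m j : ℝ)^2 * ‖b j‖^2 ≤ r^2 := by
          have hle : (m j : ℝ)^2 * ‖b j‖^2 ≤ ∑ i, (m i : ℝ)^2 * ‖b i‖^2 := by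
            apply Finset.single_le_sum (f := fun i => (m i : ℝ)^2 * ‖b i‖^2)
            · intro i _; positivity
            · exact Finset.mem_univ j
          have h2 : ‖∑ i, m i • b i‖^2 ≤ r^2 :=
            pow_le_pow_left₀ (norm_nonneg _) hxr 2
          rw [hnorm] at h2
          linarith
        have hm1 : (1:ℝ) ≤ (m j : ℝ)^2 := by
          have : (1:ℤ) ≤ (m j)^2 := by
            rcases lt_or_gt_of_ne hmj with h | h <;> nlinarith
          exact_mod_cast this
        have hbj : ‖b j‖ ≤ r := by
          have h3 : ‖b j‖^2 ≤ r^2 := by nlinarith [norm_nonneg (b j)]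
          exact (pow_le_pow_iff_left₀ (norm_nonneg _) hr0 (by norm_num)).mp h3
        exact ⟨⟨j, hbj⟩, rfl⟩
    · apply Submodule.span_mono
      rintro x ⟨⟨j, hj⟩, rfl⟩
      refine ⟨⟨Pi.single j 1, ?_⟩, hj⟩
      rw [Finset.sum_eq_single j]
      · rw [Pi.single_eq_same, one_smul]
      · intro i _ hi
        rw [Pi.single_eq_of_ne hi, zero_smul]
      · intro h; exact absurd (Finset.mem_univ j) h
  rw [hspan]
  have hli : LinearIndependent ℝ (fun j : {j : Fin n // ‖b j‖ ≤ r} => b j) :=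
    b.linearIndependent.comp Subtype.val Subtype.val_injective
  rw [finrank_span_eq_card hli, Nat.card_eq_fintype_card]
lemma succMin_eq {V : Type*} [NormedAddCommGroup V] [InnerProductSpace ℝ V]
    {n : ℕ} (b : Module.Basis (Fin n) ℝ V)
    (hortho : ∀ i j, i ≠ j → (inner ℝ (b i) (b j) : ℝ) = 0) (i : Fin n) :
    succMin b ((i : ℕ) + 1) = ‖b (Tuple.sort (fun j => ‖b j‖) i)‖ := by
  classical
  set σ := Tuple.sort (fun j => ‖b j‖) with hσ
  set c : Fin n → ℝ := fun k => ‖b (σ k)‖ with hc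
  have hmono : Monotone c := Tuple.monotone_sort (fun j => ‖b j‖)
  have hcard : ∀ r : ℝ, Nat.card {j : Fin n // ‖b j‖ ≤ r}
      = (Finset.univ.filter (fun j : Fin n => ‖b j‖ ≤ r)).card := by
    intro r
    rw [Nat.card_eq_fintype_card, Fintype.card_subtype]
  have hA : ∀ r : ℝ, ((i : ℕ) + 1 ≤ Module.finrank ℝ (Submodule.span ℝ
      {x : V | (∃ m : Fin n → ℤ, x = ∑ j, m j • b j) ∧ ‖x‖ ≤ r}) ↔ c i ≤ r) := by
    intro r
    rw [finrank_span_ball b hortho r, hcard r]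
    constructor
    · intro h
      by_contra hr
      push_neg at hr
      have hsub : Finset.univ.filter (fun j : Fin n => ‖b j‖ ≤ r) ⊆
          (Finset.Iio i).image σ := by
        intro j hj
        rw [Finset.mem_filter] at hj
        rw [Finset.mem_image]
        refine ⟨σ.symm j, ?_, by simp⟩
        rw [Finset.mem_Iio]
        by_contra hk
        push_neg at hk
        have : c i ≤ c (σ.symm j) := hmono hk
        have hcj : c (σ.symm j) = ‖b j‖ := by simp [hc]
        rw [hcj] at this
        linarith [hj.2]
      have h2 : ((Finset.Iio i).image σ).card ≤ (Finset.Iio i).card :=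
        Finset.card_image_le
      have h3 : (Finset.Iio i).card = (i : ℕ) := Fin.card_Iio i
      have := Finset.card_le_card hsub
      omega
    · intro h
      have hsub : (Finset.Iic i).image σ ⊆
          Finset.univ.filter (fun j : Fin n => ‖b j‖ ≤ r) := by
        intro j hj
        rw [Finset.mem_image] at hj
        obtain ⟨k, hk, rfl⟩ := hj
        rw [Finset.mem_filter]
        refine ⟨Finset.mem_univ _, ?_⟩
        rw [Finset.mem_Iic] at hk
        exact le_trans (hmono hk) h
      have h2 : ((Finset.Iic i).image σ).card = (i : ℕ) + 1 := by
        rw [Finset.card_image_of_injective _ σ.injective, Fin.card_Iic]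
      have := Finset.card_le_card hsub
      omega
  have hci : 0 < c i := norm_pos_iff.mpr (b.ne_zero _)
  unfold succMin
  apply le_antisymm
  · apply csInf_le
    · exact ⟨0, fun r hr => hr.1.le⟩
    · exact ⟨hci, (hA (c i)).mpr le_rfl⟩
  · apply le_csInf
    · exact ⟨c i, hci, (hA (c i)).mpr le_rfl⟩
    · intro r hr
      exact (hA r).mp hr.2

theorem h0_orthogonal_successive_minima
    {V : Type*} [NormedAddCommGroup V] [InnerProductSpace ℝ V]
    {n : ℕ} (b : Module.Basis (Fin n) ℝ V)
    (hortho : ∀ i j, i ≠ j → (inner ℝ (b i) (b j) : ℝ) = 0) :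
    -(n / 2 : ℝ) * Real.log n + Real.log (1 - 1 / (2 * Real.pi))
      ≤ Real.log (Nat.card {m : Fin n → ℤ // ‖∑ i, m i • b i‖ ≤ 1})
        + ∑ i : Fin n, Real.log (min (succMin b ((i : ℕ) + 1)) 1) ∧
    Real.log (Nat.card {m : Fin n → ℤ // ‖∑ i, m i • b i‖ ≤ 1})
        + ∑ i : Fin n, Real.log (min (succMin b ((i : ℕ) + 1)) 1)
      ≤ Real.pi + n * Real.log (3 / 2) := by
  classical
  have ha : ∀ j, 0 < ‖b j‖ := fun j => norm_pos_iff.mpr (b.ne_zero j)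
  -- rewrite the successive-minima sum
  have hsum_min : ∑ i : Fin n, Real.log (min (succMin b ((i : ℕ) + 1)) 1)
      = ∑ j : Fin n, Real.log (min ‖b j‖ 1) := by
    calc ∑ i : Fin n, Real.log (min (succMin b ((i : ℕ) + 1)) 1)
        = ∑ i : Fin n, Real.log (min ‖b (Tuple.sort (fun j => ‖b j‖) i)‖ 1) :=
          Finset.sum_congr rfl fun i _ => by rw [succMin_eq b hortho i]
      _ = ∑ j : Fin n, Real.log (min ‖b j‖ 1) :=
          Equiv.sum_comp (Tuple.sort (fun j => ‖b j‖)) (fun j => Real.log (min ‖b j‖ 1))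
  have hns : ∀ m : Fin n → ℤ, ‖∑ i, m i • b i‖^2 = ∑ i, (m i : ℝ)^2 * ‖b i‖^2 :=
    norm_zsum_sq b hortho
  set Kz : Fin n → ℤ := fun j => ⌊1 / ‖b j‖⌋ with hKz_def
  have hKz0 : ∀ j, 0 ≤ Kz j := fun j => Int.floor_nonneg.2 (by positivity)
  set F : Finset (Fin n → ℤ) := Fintype.piFinset (fun j => Finset.Icc (-(Kz j)) (Kz j))
    with hF_def
  set G : Finset (Fin n → ℤ) := F.filter (fun m => ‖∑ i, m i • b i‖ ≤ 1) with hG_def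
  have hmemF : ∀ m : Fin n → ℤ, ‖∑ i, m i • b i‖ ≤ 1 → m ∈ F := by
    intro m hm
    rw [hF_def, Fintype.mem_piFinset]
    intro j
    rw [Finset.mem_Icc]
    have h1 : (m j : ℝ)^2 * ‖b j‖^2 ≤ 1 := by
      have hle : (m j : ℝ)^2 * ‖b j‖^2 ≤ ∑ i, (m i : ℝ)^2 * ‖b i‖^2 := by
        apply Finset.single_le_sum (f := fun i => (m i : ℝ)^2 * ‖b i‖^2)
        · intro i _; positivity
        · exact Finset.mem_univ j
      have h2 : ‖∑ i, m i • b i‖^2 ≤ 1 := by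
        nlinarith [norm_nonneg (∑ i, m i • b i)]
      rw [hns m] at h2
      linarith
    have hma : (m j : ℝ) * ‖b j‖ ≤ 1 := by
      nlinarith [sq_nonneg ((m j : ℝ) * ‖b j‖ - 1), ha j]
    have hma' : (-(m j) : ℝ) * ‖b j‖ ≤ 1 := by
      push_cast
      nlinarith [sq_nonneg ((m j : ℝ) * ‖b j‖ + 1), ha j]
    constructor
    · rw [neg_le]
      rw [hKz_def]
      rw [Int.le_floor]
      push_cast
      rw [le_div_iff₀ (ha j)]
      push_cast at hma' ⊢
      linarith
    · rw [hKz_def, Int.le_floor]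
      rw [le_div_iff₀ (ha j)]
      exact hma
  have hGiff : ∀ m : Fin n → ℤ, ‖∑ i, m i • b i‖ ≤ 1 ↔ m ∈ G := by
    intro m
    constructor
    · intro h
      rw [hG_def, Finset.mem_filter]
      exact ⟨hmemF m h, h⟩
    · intro h
      exact (Finset.mem_filter.1 h).2
  have hN : Nat.card {m : Fin n → ℤ // ‖∑ i, m i • b i‖ ≤ 1} = G.card := by
    rw [← Nat.card_eq_finsetCard G]
    exact Nat.card_congr (Equiv.subtypeEquivRight hGiff)
  have hG0 : (0 : Fin n → ℤ) ∈ G := by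
    rw [← hGiff]
    simp
  have hN1 : 1 ≤ G.card := Finset.card_pos.mpr ⟨0, hG0⟩
  constructor
  · -- LOWER BOUND
    set Kl : Fin n → ℕ := fun j => ⌊1 / (Real.sqrt n * ‖b j‖)⌋₊ with hKl_def
    set B : Finset (Fin n → ℤ) := Fintype.piFinset (fun j => Finset.Icc (-(Kl j : ℤ)) (Kl j))
      with hB_def
    have hBsub : B ⊆ G := by
      intro m hm
      rw [← hGiff]
      rw [hB_def, Fintype.mem_piFinset] at hm
      have hterm : ∀ j, (m j : ℝ)^2 * ‖b j‖^2 ≤ 1 / n := by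
        intro j
        have hn : 0 < n := j.pos
        have hn' : (0:ℝ) < Real.sqrt n := Real.sqrt_pos.2 (by exact_mod_cast hn)
        have hmj := hm j
        rw [Finset.mem_Icc] at hmj
        have h1 : (m j : ℝ)^2 ≤ (Kl j : ℝ)^2 := by
          have l1 : ((m j : ℤ) : ℝ) ≤ ((Kl j : ℤ) : ℝ) := by exact_mod_cast hmj.2
          have l2 : ((-(Kl j : ℤ) : ℤ) : ℝ) ≤ ((m j : ℤ) : ℝ) := by exact_mod_cast hmj.1
          push_cast at l1 l2
          nlinarith
        have h2 : (Kl j : ℝ) ≤ 1 / (Real.sqrt n * ‖b j‖) :=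
          Nat.floor_le (by positivity)
        have h3 : (Kl j : ℝ) * ‖b j‖ ≤ 1 / Real.sqrt n := by
          have h2' : (Kl j : ℝ) * ‖b j‖ ≤ 1 / (Real.sqrt n * ‖b j‖) * ‖b j‖ :=
            mul_le_mul_of_nonneg_right h2 (ha j).le
          have hbne : ‖b j‖ ≠ 0 := (ha j).ne'
          have hsne : Real.sqrt n ≠ 0 := hn'.ne'
          have h2'' : 1 / (Real.sqrt n * ‖b j‖) * ‖b j‖ = 1 / Real.sqrt n := by
            field_simp
          linarith
        have h4 : ((Kl j : ℝ) * ‖b j‖)^2 ≤ (1 / Real.sqrt n)^2 :=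
          pow_le_pow_left₀ (by positivity) h3 2
        have h5 : (1 / Real.sqrt n : ℝ)^2 = 1 / n := by
          rw [div_pow, one_pow, Real.sq_sqrt (by positivity : (0:ℝ) ≤ (n:ℝ))]
        calc (m j : ℝ)^2 * ‖b j‖^2 ≤ (Kl j : ℝ)^2 * ‖b j‖^2 := by nlinarith [sq_nonneg ‖b j‖]
          _ = ((Kl j : ℝ) * ‖b j‖)^2 := by ring
          _ ≤ 1 / n := by rw [← h5]; exact h4
      have hsq : ‖∑ i, m i • b i‖^2 ≤ 1 := by
        rw [hns m]
        calc ∑ i, (m i : ℝ)^2 * ‖b i‖^2 ≤ ∑ _i : Fin n, (1 / n : ℝ) :=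
              Finset.sum_le_sum fun i _ => hterm i
          _ = n * (1 / n : ℝ) := by rw [Finset.sum_const, Finset.card_univ, Fintype.card_fin,
                nsmul_eq_mul]
          _ ≤ 1 := by
              rcases Nat.eq_zero_or_pos n with h | h
              · subst h; norm_num
              · rw [mul_one_div, div_self (by exact_mod_cast h.ne' : (n:ℝ) ≠ 0)]
      nlinarith [norm_nonneg (∑ i, m i • b i)]
    have hBcard : B.card = ∏ j : Fin n, (2 * Kl j + 1) := by
      rw [hB_def, Fintype.card_piFinset]
      apply Finset.prod_congr rfl
      intro j _
      rw [Int.card_Icc]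
      rw [show (Kl j : ℤ) + 1 - -(Kl j : ℤ) = ((2 * Kl j + 1 : ℕ) : ℤ) by push_cast; ring]
      rw [Int.toNat_natCast]
    have hprod_le : (∏ j : Fin n, (2 * Kl j + 1)) ≤ G.card := by
      rw [← hBcard]; exact Finset.card_le_card hBsub
    -- log bounds
    have hlogN : ∑ j : Fin n, Real.log (2 * (Kl j : ℝ) + 1) ≤ Real.log (G.card) := by
      have hpos : ∀ j ∈ Finset.univ, (0:ℝ) < 2 * (Kl j : ℝ) + 1 := fun j _ => by positivity
      rw [← Real.log_prod (fun j hj => (hpos j hj).ne')]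
      apply Real.log_le_log (Finset.prod_pos hpos)
      calc ∏ j : Fin n, (2 * (Kl j : ℝ) + 1) = ((∏ j : Fin n, (2 * Kl j + 1) : ℕ) : ℝ) := by
            rw [Nat.cast_prod]
            exact Finset.prod_congr rfl fun j _ => by push_cast; ring
        _ ≤ (G.card : ℝ) := by exact_mod_cast hprod_le
    have hfactor : ∀ j : Fin n, -(1/2 : ℝ) * Real.log n
        ≤ Real.log (2 * (Kl j : ℝ) + 1) + Real.log (min ‖b j‖ 1) := by
      intro j
      have hn : 0 < n := j.pos
      have hn1 : (1:ℝ) ≤ (n:ℝ) := by exact_mod_cast hn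
      have hs : (0:ℝ) < Real.sqrt n := Real.sqrt_pos.2 (by linarith)
      have hmin : 0 < min ‖b j‖ 1 := lt_min (ha j) one_pos
      have hkey : 1 / Real.sqrt n ≤ (2 * (Kl j : ℝ) + 1) * min ‖b j‖ 1 := by
        rcases le_or_gt (1 / (Real.sqrt n * ‖b j‖)) 1 with hc | hc
        · -- ‖b j‖ ≥ 1/√n
          have hb1 : 1 / Real.sqrt n ≤ ‖b j‖ := by
            rw [div_le_one (mul_pos hs (ha j))] at hc
            rw [div_le_iff₀ hs, mul_comm]
            exact hc
          have : 1 / Real.sqrt n ≤ min ‖b j‖ 1 := by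
            apply le_min hb1
            rw [div_le_one hs]
            have : (1:ℝ) ≤ Real.sqrt n := by
              rw [show (1:ℝ) = Real.sqrt 1 by simp]
              exact Real.sqrt_le_sqrt hn1
            linarith
          nlinarith [this, (Nat.cast_nonneg (Kl j) : (0:ℝ) ≤ Kl j)]
        · -- ‖b j‖ < 1/√n, so Kl j ≥ 1 and 2 Kl + 1 ≥ 1/(√n ‖b j‖)
          have hbj : ‖b j‖ < 1 := by
            by_contra hb
            push_neg at hb
            have : 1 / (Real.sqrt n * ‖b j‖) ≤ 1 := by
              rw [div_le_one (mul_pos hs (ha j))]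
              nlinarith [hs, (show (1:ℝ) ≤ Real.sqrt n by
                rw [show (1:ℝ) = Real.sqrt 1 by simp]; exact Real.sqrt_le_sqrt hn1)]
            linarith
          have hminb : min ‖b j‖ 1 = ‖b j‖ := min_eq_left hbj.le
          have hfl : 1 / (Real.sqrt n * ‖b j‖) - 1 < (Kl j : ℝ) :=
            Nat.sub_one_lt_floor _
          have h2 : 1 / (Real.sqrt n * ‖b j‖) ≤ 2 * (Kl j : ℝ) + 1 := by
            have hk1 : (1:ℝ) ≤ Kl j := by
              have : (1:ℕ) ≤ Kl j := by
                rw [hKl_def, Nat.le_floor_iff (by positivity)]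
                push_cast
                linarith
              exact_mod_cast this
            linarith
          rw [hminb]
          have hcalc : 1 / Real.sqrt n = (1 / (Real.sqrt n * ‖b j‖)) * ‖b j‖ := by
            symm
            rw [div_mul_eq_mul_div, one_mul, mul_comm (Real.sqrt (n:ℝ)) ‖b j‖,
              ← div_div, div_self (ha j).ne']
          calc 1 / Real.sqrt n = (1 / (Real.sqrt n * ‖b j‖)) * ‖b j‖ := hcalc
            _ ≤ (2 * (Kl j : ℝ) + 1) * ‖b j‖ :=
                mul_le_mul_of_nonneg_right h2 (ha j).le
      have hlog : Real.log (1 / Real.sqrt n) ≤ Real.log ((2 * (Kl j : ℝ) + 1) * min ‖b j‖ 1) :=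
        Real.log_le_log (one_div_pos.mpr hs) hkey
      rw [Real.log_mul (by positivity) hmin.ne'] at hlog
      rw [one_div, Real.log_inv, Real.log_sqrt (by positivity)] at hlog
      linarith
    have hsum : ∑ j : Fin n, (-(1/2 : ℝ) * Real.log n)
        ≤ ∑ j : Fin n, (Real.log (2 * (Kl j : ℝ) + 1) + Real.log (min ‖b j‖ 1)) :=
      Finset.sum_le_sum fun j _ => hfactor j
    rw [Finset.sum_const, Finset.card_univ, Fintype.card_fin, nsmul_eq_mul] at hsum
    rw [Finset.sum_add_distrib] at hsum
    have hlogc : Real.log (1 - 1 / (2 * π)) ≤ 0 := by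
      apply Real.log_nonpos
      · have := Real.pi_gt_three
        have h2π : (6:ℝ) < 2 * π := by linarith
        have : 1 / (2 * π) ≤ 1 := by
          rw [div_le_one (by linarith)]
          linarith
        linarith
      · have h2π : (0:ℝ) < 2 * π := by positivity
        have : 0 < 1 / (2 * π) := by positivity
        linarith
    rw [hsum_min, hN]
    have : -(n / 2 : ℝ) * Real.log n = (n:ℝ) * (-(1/2 : ℝ) * Real.log n) := by ring
    rw [this]
    linarith [hlogN, hsum]
  · -- UPPER BOUND
    have hcount : (G.card : ℝ) ≤ Real.exp π * ∏ j : Fin n, thetaF ‖b j‖ (Kz j).toNat := by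
      have step1 : (G.card : ℝ) = ∑ _m ∈ G, (1:ℝ) := by
        rw [Finset.sum_const, nsmul_eq_mul, mul_one]
      have step2 : ∀ m ∈ G, (1:ℝ) ≤ Real.exp π * ∏ j : Fin n,
          Real.exp (-(π * ‖b j‖^2) * (m j : ℝ)^2) := by
        intro m hm
        have hm1 : ‖∑ i, m i • b i‖ ≤ 1 := (hGiff m).mpr hm
        have hprod : ∏ j : Fin n, Real.exp (-(π * ‖b j‖^2) * (m j : ℝ)^2)
            = Real.exp (-π * ‖∑ i, m i • b i‖^2) := by
          rw [← Real.exp_sum, hns m]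
          congr 1
          rw [Finset.mul_sum]
          apply Finset.sum_congr rfl
          intro j _
          ring
        rw [hprod, ← Real.exp_add]
        rw [show (1:ℝ) = Real.exp 0 by simp]
        rw [Real.exp_le_exp]
        have hsq : ‖∑ i, m i • b i‖^2 ≤ 1 := by
          nlinarith [norm_nonneg (∑ i, m i • b i)]
        nlinarith [Real.pi_pos]
      have step3 : (G.card : ℝ) ≤ ∑ m ∈ G, Real.exp π * ∏ j : Fin n,
          Real.exp (-(π * ‖b j‖^2) * (m j : ℝ)^2) := by
        rw [step1]
        exact Finset.sum_le_sum step2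
      have step4 : ∑ m ∈ G, Real.exp π * ∏ j : Fin n,
            Real.exp (-(π * ‖b j‖^2) * (m j : ℝ)^2)
          ≤ ∑ m ∈ F, Real.exp π * ∏ j : Fin n,
            Real.exp (-(π * ‖b j‖^2) * (m j : ℝ)^2) := by
        apply Finset.sum_le_sum_of_subset_of_nonneg (Finset.filter_subset _ _)
        intro m _ _
        positivity
      have step5 : ∑ m ∈ F, Real.exp π * ∏ j : Fin n,
            Real.exp (-(π * ‖b j‖^2) * (m j : ℝ)^2)
          = Real.exp π * ∏ j : Fin n, ∑ mj ∈ Finset.Icc (-(Kz j)) (Kz j),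
            Real.exp (-(π * ‖b j‖^2) * (mj : ℝ)^2) := by
        rw [← Finset.mul_sum]
        congr 1
        rw [Finset.prod_univ_sum]
      calc (G.card : ℝ) ≤ _ := step3
        _ ≤ _ := step4
        _ = _ := step5
        _ = Real.exp π * ∏ j : Fin n, thetaF ‖b j‖ (Kz j).toNat := by
            congr 1
            exact Finset.prod_congr rfl fun j _ => sum_Icc_eq_thetaF ‖b j‖ (Kz j) (hKz0 j)
    have hlogN : Real.log (G.card) ≤ π + ∑ j : Fin n, Real.log (thetaF ‖b j‖ (Kz j).toNat) := by
      have hΘpos : ∀ j ∈ Finset.univ, (0:ℝ) < thetaF ‖b j‖ (Kz j).toNat := fun j _ => lt_of_lt_of_le one_pos (thetaF_one_le ‖b j‖ (Kz j).toNat)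
      calc Real.log (G.card) ≤ Real.log (Real.exp π * ∏ j : Fin n, thetaF ‖b j‖ (Kz j).toNat) :=
            Real.log_le_log (by exact_mod_cast hN1) hcount
        _ = π + ∑ j : Fin n, Real.log (thetaF ‖b j‖ (Kz j).toNat) := by
            rw [Real.log_mul (Real.exp_ne_zero _)
              (Finset.prod_pos hΘpos).ne', Real.log_exp,
              Real.log_prod (fun j hj => (hΘpos j hj).ne')]
    have hfactor : ∀ j : Fin n, Real.log (thetaF ‖b j‖ (Kz j).toNat) + Real.log (min ‖b j‖ 1) ≤ Real.log (3/2) := by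
      intro j
      have hmin : 0 < min ‖b j‖ 1 := lt_min (ha j) one_pos
      have hΘpos : (0:ℝ) < thetaF ‖b j‖ (Kz j).toNat := lt_of_lt_of_le one_pos (thetaF_one_le ‖b j‖ (Kz j).toNat)
      rw [← Real.log_mul hΘpos.ne' hmin.ne']
      apply Real.log_le_log (by positivity)
      exact thetaF_mul_min_le (ha j) ((Kz j).toNat)
    rw [hsum_min, hN]
    have hsum2 : ∑ j : Fin n, Real.log (thetaF ‖b j‖ (Kz j).toNat) + ∑ j : Fin n, Real.log (min ‖b j‖ 1)
        ≤ n * Real.log (3/2) := by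
      rw [← Finset.sum_add_distrib]
      calc ∑ j : Fin n, (Real.log (thetaF ‖b j‖ (Kz j).toNat) + Real.log (min ‖b j‖ 1))
          ≤ ∑ _j : Fin n, Real.log (3/2) := Finset.sum_le_sum fun j _ => hfactor j
        _ = n * Real.log (3/2) := by
            rw [Finset.sum_const, Finset.card_univ, Fintype.card_fin, nsmul_eq_mul]
    calc Real.log (G.card) + ∑ j : Fin n, Real.log (min ‖b j‖ 1)
        ≤ (π + ∑ j : Fin n, Real.log (thetaF ‖b j‖ (Kz j).toNat))
            + ∑ j : Fin n, Real.log (min ‖b j‖ 1) := add_le_add_left hlogN _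
      _ = π + (∑ j : Fin n, Real.log (thetaF ‖b j‖ (Kz j).toNat)
            + ∑ j : Fin n, Real.log (min ‖b j‖ 1)) := by ring
      _ ≤ π + n * Real.log (3/2) := add_le_add_right hsum2 _
end
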